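/- arXiv:0707.3627 — 4 statements merged into one kernel-verified Lean document; each statement's English description precedes it below -/
import Mathlib

section
/- The q-commutative power series ring R = k_q[[x_1,…,x_n]] is a left and right noetherian integral domain (it has no zero divisors). -/
/-!
Common setup: `q`-commutative power series ring `R = k_q[[x_1,…,x_n]]` and
`q`-commutative Laurent series ring `L = k_q[[x_1^{±1},…,x_n^{±1}]]`, characterized
by their coefficient descriptions (twisted convolution multiplication).
-/

noncomputable section

/-- A multiplicatively antisymmetric `n × n` matrix over `k`:
`q_{ii} = 1` and `q_{ij} q_{ji} = 1`. -/
structure QMatrix (k : Type*) [Field k] (n : ℕ) where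
  q : Fin n → Fin n → k
  diag : ∀ i, q i i = 1
  antisym : ∀ i j, q i j * q j i = 1

namespace QMatrix

variable {k : Type*} [Field k] {n : ℕ} (Q : QMatrix k n)

lemma q_ne_zero (i j : Fin n) : Q.q i j ≠ 0 := fun h0 => by
  have h1 := Q.antisym i j
  rw [h0, zero_mul] at h1
  exact zero_ne_one h1

/-- The twisting weight `∏_{1 ≤ j < i ≤ n} q_{ij}^{u_i v_j}` (natural exponents), so that
`x^u · x^v = weight u v · x^{u+v}` in `R`. -/
def weight (u v : Fin n →₀ ℕ) : k :=
  ∏ i : Fin n, ∏ j : Fin n, if j < i then Q.q i j ^ (u i * v j) else 1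

/-- The twisting weight `∏_{1 ≤ j < i ≤ n} q_{ij}^{u_i v_j}` (integer exponents), so that
`x^u · x^v = zweight u v · x^{u+v}` in `L`. -/
def zweight (u v : Fin n → ℤ) : k :=
  ∏ i : Fin n, ∏ j : Fin n, if j < i then Q.q i j ^ (u i * v j) else 1

/-- The alternating bicharacter `σ(s,t) = ∏_{i,j} q_{ij}^{s_i t_j}`, so that
`x^s x^t = σ(s,t) x^t x^s` in `L`. -/
def sigma (s t : Fin n → ℤ) : k :=
  ∏ i : Fin n, ∏ j : Fin n, Q.q i j ^ (s i * t j)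

end QMatrix

/-- `R` is (a model of) the `q`-commutative power series ring `k_q[[x_1, …, x_n]]`:
its underlying `k`-vector space is that of all families of coefficients indexed by `ℕ^n`,
the constant series `1` is the multiplicative unit, and multiplication is given by the
twisted convolution: the coefficient of `x^s` in `f·g` is
`∑_{u+v=s} f_u g_v ∏_{1≤j<i≤n} q_{ij}^{u_i v_j}`. -/
structure IsQPowerSeriesRing {k : Type*} [Field k] {n : ℕ} (Q : QMatrix k n)
    (R : Type*) [Ring R] [Algebra k R] where
  coeff : R ≃ₗ[k] ((Fin n →₀ ℕ) → k)
  coeff_one : ∀ s, coeff 1 s = if s = 0 then 1 else 0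
  coeff_mul : ∀ f g : R, ∀ s, coeff (f * g) s =
    ∑ uv ∈ Finset.HasAntidiagonal.antidiagonal s, coeff f uv.1 * coeff g uv.2 * Q.weight uv.1 uv.2

namespace IsQPowerSeriesRing

variable {k : Type*} [Field k] {n : ℕ} {Q : QMatrix k n}
variable {R : Type*} [Ring R] [Algebra k R] (h : IsQPowerSeriesRing Q R)

/-- The monic monomial `x^s` of `R`. -/
def mono (s : Fin n →₀ ℕ) : R :=
  h.coeff.symm (fun t => if t = s then 1 else 0)

/-- The variable `x_i` of `R`. -/
def X (i : Fin n) : R := h.mono (Finsupp.single i 1)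

/-- The augmentation ideal `J = ⟨x_1, …, x_n⟩` of `R`, as a two-sided ideal. -/
def Jideal : TwoSidedIdeal R := TwoSidedIdeal.span (Set.range h.X)

/-- For `w ⊆ {1,…,n}`, the two-sided ideal `J_w = ⟨x_i : i ∈ w⟩` of `R`. -/
def Jw (w : Finset (Fin n)) : TwoSidedIdeal R :=
  TwoSidedIdeal.span {r : R | ∃ i ∈ w, r = h.X i}

/-- The action of `θ ∈ H = (kˣ)^n` on `R`, determined by
`x^s ↦ θ_1^{s_1} ⋯ θ_n^{s_n} x^s` and applied coefficientwise to series. -/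
def hAct (θ : Fin n → kˣ) (f : R) : R :=
  h.coeff.symm (fun s => (∏ i, (θ i : k) ^ (s i)) * h.coeff f s)

/-- A two-sided ideal of `R` is `H`-stable if it is mapped to itself by every element
of the torus `H = (kˣ)^n`. -/
def IsHStable (I : TwoSidedIdeal R) : Prop :=
  ∀ θ : Fin n → kˣ, h.hAct θ '' (I : Set R) = (I : Set R)

end IsQPowerSeriesRing

/-- A coefficient family `c : ℤ^n → k` is Laurent-bounded if `c s = 0` whenever some
coordinate of `s` is sufficiently negative, i.e. `∃ N, min(s_1,…,s_n) < -N → c s = 0`. -/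
def LaurentBounded {k : Type*} [Field k] {n : ℕ} (c : (Fin n → ℤ) → k) : Prop :=
  ∃ N : ℕ, ∀ s : Fin n → ℤ, (∃ i, s i < -(N : ℤ)) → c s = 0

/-- `L` is (a model of) the `q`-commutative Laurent series ring
`k_q[[x_1^{±1}, …, x_n^{±1}]]`: its elements correspond, `k`-linearly, to the
Laurent-bounded coefficient families indexed by `ℤ^n`, the constant series `1` is the
multiplicative unit, and multiplication is given by the twisted convolution. -/
structure IsQLaurentSeriesRing {k : Type*} [Field k] {n : ℕ} (Q : QMatrix k n)
    (L : Type*) [Ring L] [Algebra k L] where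
  coeff : L →ₗ[k] ((Fin n → ℤ) → k)
  coeff_injective : Function.Injective coeff
  coeff_bounded : ∀ f, LaurentBounded (coeff f)
  coeff_surjective : ∀ c, LaurentBounded c → ∃ f, coeff f = c
  coeff_one : ∀ s, coeff 1 s = if s = 0 then 1 else 0
  mul_support_finite : ∀ f g : L, ∀ s : Fin n → ℤ,
    (Function.support fun u => coeff f u * coeff g (s - u) * Q.zweight u (s - u)).Finite
  coeff_mul : ∀ f g : L, ∀ s : Fin n → ℤ, coeff (f * g) s =
    ∑ᶠ u : Fin n → ℤ, coeff f u * coeff g (s - u) * Q.zweight u (s - u)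

namespace IsQLaurentSeriesRing

variable {k : Type*} [Field k] {n : ℕ} {Q : QMatrix k n}
variable {L : Type*} [Ring L] [Algebra k L] (h : IsQLaurentSeriesRing Q L)

/-- The action of `θ ∈ H = (kˣ)^n` on `L`, determined by
`x^s ↦ θ_1^{s_1} ⋯ θ_n^{s_n} x^s` and applied coefficientwise to series. -/
def hAct (θ : Fin n → kˣ) (f : L) : L :=
  Classical.choose (h.coeff_surjective
    (fun s => (∏ i, ((θ i ^ (s i) : kˣ) : k)) * h.coeff f s)
    (by
      obtain ⟨N, hN⟩ := h.coeff_bounded f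
      exact ⟨N, fun s hs => by simp only []; rw [hN s hs, mul_zero]⟩))

/-- A two-sided ideal of `L` is `H`-stable if it is mapped to itself by every element
of the torus `H = (kˣ)^n`. -/
def IsHStable (I : TwoSidedIdeal L) : Prop :=
  ∀ θ : Fin n → kˣ, h.hAct θ '' (I : Set L) = (I : Set L)

end IsQLaurentSeriesRing

/-- A two-sided ideal `P` of a (possibly noncommutative) ring `A` is prime if `P ≠ A`
and whenever `I, J` are two-sided ideals with `IJ ⊆ P`, then `I ⊆ P` or `J ⊆ P`. -/
def IsPrimeTwoSided {A : Type*} [Ring A] (P : TwoSidedIdeal A) : Prop :=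
  P ≠ ⊤ ∧ ∀ I J : TwoSidedIdeal A, (∀ a ∈ I, ∀ b ∈ J, a * b ∈ P) → I ≤ P ∨ J ≤ P


namespace Stmt0Aux

variable {n : ℕ}

/-- total degree -/
def deg (s : Fin n →₀ ℕ) : ℕ := s.sum fun _ m => m

lemma deg_add (u v : Fin n →₀ ℕ) : deg (u + v) = deg u + deg v :=
  Finsupp.sum_add_index' (fun _ => rfl) (fun _ _ _ => rfl)

/-- the degree-lex order key -/
def phi (s : Fin n →₀ ℕ) : ℕ ×ₗ Lex (Fin n →₀ ℕ) := toLex (deg s, toLex s)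

lemma phi_injective : Function.Injective (phi (n := n)) := by
  intro a b hab
  have := congrArg (fun x => (ofLex x).2) hab
  exact toLex.injective this

lemma phi_le_phi_iff {a b : Fin n →₀ ℕ} :
    phi a ≤ phi b ↔ deg a < deg b ∨ (deg a = deg b ∧ toLex a ≤ toLex b) :=
  Prod.Lex.le_iff

lemma phi_lt_phi_iff {a b : Fin n →₀ ℕ} :
    phi a < phi b ↔ deg a < deg b ∨ (deg a = deg b ∧ toLex a < toLex b) :=
  Prod.Lex.lt_iff

lemma toLex_add_le_add {a b c d : Fin n →₀ ℕ} (h1 : toLex a ≤ toLex b) (h2 : toLex c ≤ toLex d) :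
    toLex (a + c) ≤ toLex (b + d) := by
  calc toLex (a + c) = toLex a + toLex c := rfl
  _ ≤ toLex b + toLex c := add_le_add_left h1 _
  _ ≤ toLex b + toLex d := add_le_add_right h2 _

lemma phi_add_le_add {a b c d : Fin n →₀ ℕ} (h1 : phi a ≤ phi b) (h2 : phi c ≤ phi d) :
    phi (a + c) ≤ phi (b + d) := by
  rw [phi_le_phi_iff] at h1 h2 ⊢
  rw [deg_add, deg_add]
  rcases h1 with h1 | ⟨h1, h1'⟩
  · exact Or.inl (Nat.add_lt_add_of_lt_of_le h1 (by rcases h2 with h2 | ⟨h2, _⟩ <;> omega))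
  · rcases h2 with h2 | ⟨h2, h2'⟩
    · exact Or.inl (by omega)
    · exact Or.inr ⟨by omega, toLex_add_le_add h1' h2'⟩

lemma phi_add_lt_add_right {a b c : Fin n →₀ ℕ} (h1 : phi a < phi b) :
    phi (a + c) < phi (b + c) := by
  rw [phi_lt_phi_iff] at h1 ⊢
  rw [deg_add, deg_add]
  rcases h1 with h1 | ⟨h1, h1'⟩
  · exact Or.inl (by omega)
  · refine Or.inr ⟨by omega, ?_⟩
    calc toLex (a + c) = toLex a + toLex c := rfl
    _ < toLex b + toLex c := add_lt_add_left h1' _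
    _ = toLex (b + c) := rfl

/-- combined: if a ≤ b, c ≤ d and (a+c) = (b+d) then a = b -/
lemma eq_of_phi_le_add {a b c d : Fin n →₀ ℕ} (h1 : phi a ≤ phi b) (h2 : phi c ≤ phi d)
    (he : a + c = b + d) : a = b ∧ c = d := by
  rcases h1.lt_or_eq with h1 | h1
  · exfalso
    have : phi (a + c) < phi (b + d) :=
      lt_of_lt_of_le (phi_add_lt_add_right h1) (phi_add_le_add le_rfl h2)
    rw [he] at this; exact lt_irrefl _ this
  · have hab : a = b := phi_injective h1
    subst hab
    exact ⟨rfl, add_left_cancel he⟩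

/-- finiteness of phi-lower sets -/
lemma finite_phi_le (s : Fin n →₀ ℕ) : {t : Fin n →₀ ℕ | phi t ≤ phi s}.Finite := by
  have hsub : {t : Fin n →₀ ℕ | phi t ≤ phi s} ⊆ {t : Fin n →₀ ℕ | deg t ≤ deg s} := by
    intro t ht
    rcases phi_le_phi_iff.mp ht with h | ⟨h, _⟩
    · exact le_of_lt h
    · exact le_of_eq h
  refine Set.Finite.subset ?_ hsub
  have key : ∀ t : Fin n →₀ ℕ, ∀ i, t i ≤ deg t := by
    intro t i
    by_cases hi : i ∈ t.support
    · exact Finset.single_le_sum (fun _ _ => Nat.zero_le _) hi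
    · simp [Finsupp.notMem_support_iff.mp hi]
  have : {t : Fin n →₀ ℕ | deg t ≤ deg s} ⊆
      (fun f : Fin n → Fin (deg s + 1) => Finsupp.equivFunOnFinite.symm (fun i => (f i : ℕ))) ''
        Set.univ := by
    intro t ht
    have ht' : deg t ≤ deg s := ht
    refine ⟨fun i => ⟨t i, by have := key t i; omega⟩, Set.mem_univ _, ?_⟩
    apply Finsupp.equivFunOnFinite.injective
    ext i
    simp
  exact Set.Finite.subset (Set.Finite.image _ (Set.finite_univ)) this

end Stmt0Aux
namespace Stmt0Aux

variable {k : Type*} [Field k] {n : ℕ} {Q : QMatrix k n}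
variable {R : Type*} [Ring R] [Algebra k R]

lemma weight_ne_zero (Q : QMatrix k n) (u v : Fin n →₀ ℕ) : Q.weight u v ≠ 0 := by
  unfold QMatrix.weight
  rw [Finset.prod_ne_zero_iff]
  intro i _
  rw [Finset.prod_ne_zero_iff]
  intro j _
  split
  · exact pow_ne_zero _ (Q.q_ne_zero i j)
  · exact one_ne_zero

variable (h : IsQPowerSeriesRing Q R)

lemma ne_zero_iff_coeff {f : R} : f ≠ 0 ↔ ∃ s, h.coeff f s ≠ 0 := by
  constructor
  · intro hf
    by_contra hc
    push_neg at hc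
    apply hf
    apply h.coeff.injective
    ext s
    simp [hc s]
  · rintro ⟨s, hs⟩ rfl
    simp at hs

lemma exists_ltm (f : R) (hf : f ≠ 0) :
    ∃ s, h.coeff f s ≠ 0 ∧ ∀ t, h.coeff f t ≠ 0 → phi s ≤ phi t := by
  obtain ⟨s₀, hs₀⟩ := (ne_zero_iff_coeff h).mp hf
  have hfin : ({t : Fin n →₀ ℕ | phi t ≤ phi s₀} ∩ {t | h.coeff f t ≠ 0}).Finite :=
    (finite_phi_le s₀).inter_of_left _
  have hne : s₀ ∈ hfin.toFinset := by simp [hs₀]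
  obtain ⟨s, hs, hmin⟩ := Finset.exists_min_image hfin.toFinset phi ⟨s₀, hne⟩
  simp only [Set.Finite.mem_toFinset, Set.mem_inter_iff, Set.mem_setOf_eq] at hs
  refine ⟨s, hs.2, fun t ht => ?_⟩
  rcases le_or_gt (phi t) (phi s₀) with h1 | h1
  · exact hmin t (by simp [h1, ht])
  · exact le_trans hs.1 h1.le

/-- leading monomial (min in degree-lex order); junk value 0 for f = 0 -/
def ltm (f : R) : Fin n →₀ ℕ :=
  @dite _ (f ≠ 0) (Classical.dec _) (fun hf => (exists_ltm h f hf).choose) (fun _ => 0)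

lemma coeff_ltm_ne_zero {f : R} (hf : f ≠ 0) : h.coeff f (ltm h f) ≠ 0 := by
  rw [ltm, dif_pos hf]
  exact (exists_ltm h f hf).choose_spec.1

lemma ltm_min {f : R} (hf : f ≠ 0) {t : Fin n →₀ ℕ} (ht : h.coeff f t ≠ 0) :
    phi (ltm h f) ≤ phi t := by
  rw [ltm, dif_pos hf]
  exact (exists_ltm h f hf).choose_spec.2 t ht

lemma coeff_eq_zero_of_lt {f : R} {t : Fin n →₀ ℕ} (ht : phi t < phi (ltm h f)) :
    h.coeff f t = 0 := by
  by_cases hf : f = 0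
  · subst hf; simp
  · by_contra hc
    exact absurd (ltm_min h hf hc) (not_le.mpr ht)

lemma coeff_mono (t s : Fin n →₀ ℕ) :
    h.coeff (h.mono t) s = if s = t then 1 else 0 := by
  rw [IsQPowerSeriesRing.mono, LinearEquiv.apply_symm_apply]

lemma mono_ne_zero (t : Fin n →₀ ℕ) : h.mono t ≠ 0 := by
  rw [ne_zero_iff_coeff h]
  exact ⟨t, by simp [coeff_mono]⟩

lemma ltm_mono (t : Fin n →₀ ℕ) : ltm h (h.mono t) = t := by
  have h1 : h.coeff (h.mono t) (ltm h (h.mono t)) ≠ 0 := coeff_ltm_ne_zero h (mono_ne_zero h t)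
  rw [coeff_mono] at h1
  by_contra hc
  rw [if_neg hc] at h1
  exact h1 rfl

/-- if the product coefficient is nonzero, it comes from support points -/
lemma coeff_mul_support {f g : R} {s : Fin n →₀ ℕ} (hs : h.coeff (f * g) s ≠ 0) :
    ∃ u v, u + v = s ∧ h.coeff f u ≠ 0 ∧ h.coeff g v ≠ 0 := by
  rw [h.coeff_mul] at hs
  obtain ⟨⟨u, v⟩, huv, hne⟩ := Finset.exists_ne_zero_of_sum_ne_zero hs
  rw [Finset.HasAntidiagonal.mem_antidiagonal] at huv
  refine ⟨u, v, huv, fun h0 => hne (by simp [h0]), fun h0 => hne (by simp [h0])⟩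

set_option maxHeartbeats 400000 in
lemma coeff_mul_ltm {f g : R} (hf : f ≠ 0) (hg : g ≠ 0) :
    h.coeff (f * g) (ltm h f + ltm h g) =
      h.coeff f (ltm h f) * h.coeff g (ltm h g) * Q.weight (ltm h f) (ltm h g) := by
  rw [h.coeff_mul]
  refine Finset.sum_eq_single_of_mem (ltm h f, ltm h g) (Finset.HasAntidiagonal.mem_antidiagonal.mpr rfl) ?_
  rintro ⟨u, v⟩ huv hne
  rw [Finset.HasAntidiagonal.mem_antidiagonal] at huv
  by_contra hterm
  have hu : h.coeff f u ≠ 0 := fun h0 => hterm (by rw [h0]; ring)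
  have hv : h.coeff g v ≠ 0 := fun h0 => hterm (by rw [h0]; ring)
  obtain ⟨e1, e2⟩ := eq_of_phi_le_add (ltm_min h hf hu) (ltm_min h hg hv) huv.symm
  exact hne (by rw [← e1, ← e2])

include h in
lemma mul_ne_zero'' {f g : R} (hf : f ≠ 0) (hg : g ≠ 0) : f * g ≠ 0 := by
  rw [ne_zero_iff_coeff h]
  refine ⟨ltm h f + ltm h g, ?_⟩
  rw [coeff_mul_ltm h hf hg]
  exact mul_ne_zero (mul_ne_zero (coeff_ltm_ne_zero h hf) (coeff_ltm_ne_zero h hg))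
    (weight_ne_zero Q _ _)

lemma ltm_mul {f g : R} (hf : f ≠ 0) (hg : g ≠ 0) :
    ltm h (f * g) = ltm h f + ltm h g := by
  have hfg : f * g ≠ 0 := mul_ne_zero'' h hf hg
  have h1 : phi (ltm h (f * g)) ≤ phi (ltm h f + ltm h g) := by
    apply ltm_min h hfg
    rw [coeff_mul_ltm h hf hg]
    exact mul_ne_zero (mul_ne_zero (coeff_ltm_ne_zero h hf) (coeff_ltm_ne_zero h hg))
      (weight_ne_zero Q _ _)
  have h2 : phi (ltm h f + ltm h g) ≤ phi (ltm h (f * g)) := by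
    obtain ⟨u, v, huv, hu, hv⟩ := coeff_mul_support h (coeff_ltm_ne_zero h hfg)
    calc phi (ltm h f + ltm h g) ≤ phi (u + v) :=
          phi_add_le_add (ltm_min h hf hu) (ltm_min h hg hv)
    _ = phi (ltm h (f * g)) := by rw [huv]
  exact phi_injective (le_antisymm h1 h2)

include h in
lemma nontrivial_of_qpsr : Nontrivial R := by
  refine ⟨1, 0, fun h10 => ?_⟩
  have := h.coeff_one 0
  rw [h10] at this
  simp at this

include h in
lemma isDomain_of_qpsr : IsDomain R := by
  have : Nontrivial R := nontrivial_of_qpsr h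
  have : NoZeroDivisors R := by
    refine ⟨fun {f g} hfg => ?_⟩
    by_contra hc
    push_neg at hc
    exact mul_ne_zero'' h hc.1 hc.2 hfg
  exact NoZeroDivisors.to_isDomain R

end Stmt0Aux
namespace Stmt0Aux

variable {k : Type*} [Field k] {n : ℕ} {Q : QMatrix k n}
variable {R : Type*} [Ring R] [Algebra k R]

lemma isPWO_finsupp (S : Set (Fin n →₀ ℕ)) : S.IsPWO := by
  have inst : ∀ i : Fin n, IsWellOrder ((fun _ : Fin n => ℕ) i) (· < ·) := fun _ => inferInstance
  have h1 : ((⇑) '' S : Set (Fin n → ℕ)).IsPWO := Set.isPWO_of_wellQuasiOrderedLE _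
  have h2 := h1.image_of_monotone (f := (Finsupp.equivFunOnFinite.symm : (Fin n → ℕ) → (Fin n →₀ ℕ)))
    (fun a b hab => by rw [Finsupp.le_def]; intro i; simpa using hab i)
  have he : Finsupp.equivFunOnFinite.symm '' ((⇑) '' S) = S := by
    rw [Set.image_image]; simp
  rwa [he] at h2

/-- Dickson's lemma: finite basis for any subset of `ℕ^n`. -/
lemma dickson (S : Set (Fin n →₀ ℕ)) :
    ∃ B : Finset (Fin n →₀ ℕ), ↑B ⊆ S ∧ ∀ s ∈ S, ∃ b ∈ B, b ≤ s := by
  have hpwo := isPWO_finsupp S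
  set M : Set (Fin n →₀ ℕ) := {s | s ∈ S ∧ ∀ t ∈ S, t ≤ s → t = s} with hM
  have hanti : IsAntichain (· ≤ ·) M := by
    rintro a ⟨haS, ha⟩ b ⟨hbS, hb⟩ hne hle
    exact hne (hb a haS hle)
  have hfin : M.Finite :=
    hanti.finite_of_partiallyWellOrderedOn (hpwo.mono (fun x hx => hx.1))
  refine ⟨hfin.toFinset, ?_, ?_⟩
  · intro b hb
    simp only [Finset.mem_coe, Set.Finite.mem_toFinset] at hb
    exact hb.1
  · intro s hs
    have hwf : {t | t ∈ S ∧ t ≤ s}.IsWF := (hpwo.isWF).mono (fun x hx => hx.1)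
    have hne : {t | t ∈ S ∧ t ≤ s}.Nonempty := ⟨s, hs, le_rfl⟩
    refine ⟨hwf.min hne, ?_, (hwf.min_mem hne).2⟩
    rw [Set.Finite.mem_toFinset]
    refine ⟨(hwf.min_mem hne).1, fun t htS htle => ?_⟩
    by_contra hne'
    exact hwf.not_lt_min hne ⟨htS, le_trans htle (hwf.min_mem hne).2⟩
      (lt_of_le_of_ne htle hne')

variable (h : IsQPowerSeriesRing Q R)

lemma coeff_smul (c : k) (f : R) (s : Fin n →₀ ℕ) :
    h.coeff (c • f) s = c * h.coeff f s := by
  rw [map_smul]; rfl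

lemma coeff_mono_mul (t : Fin n →₀ ℕ) (f : R) (s : Fin n →₀ ℕ) :
    h.coeff (h.mono t * f) s =
      if t ≤ s then h.coeff f (s - t) * Q.weight t (s - t) else 0 := by
  rw [h.coeff_mul]
  by_cases hts : t ≤ s
  · rw [if_pos hts]
    have hmem : (t, s - t) ∈ Finset.HasAntidiagonal.antidiagonal s :=
      Finset.HasAntidiagonal.mem_antidiagonal.mpr (add_tsub_cancel_of_le hts)
    have hside : ∀ uv ∈ Finset.HasAntidiagonal.antidiagonal s, uv ≠ (t, s - t) →
        h.coeff (h.mono t) uv.1 * h.coeff f uv.2 * Q.weight uv.1 uv.2 = 0 := by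
      rintro ⟨u, v⟩ huv hne
      rw [Finset.HasAntidiagonal.mem_antidiagonal] at huv
      by_cases hut : u = t
      · subst hut
        have hv : v = s - u := by
          rw [← huv, add_tsub_cancel_left]
        exact absurd (by rw [hv]) hne
      · rw [coeff_mono, if_neg hut, zero_mul, zero_mul]
    rw [Finset.sum_eq_single_of_mem (t, s - t) hmem hside, coeff_mono, if_pos rfl, one_mul]
  · rw [if_neg hts]
    refine Finset.sum_eq_zero ?_
    rintro ⟨u, v⟩ huv
    rw [Finset.HasAntidiagonal.mem_antidiagonal] at huv
    have hut : u ≠ t := by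
      rintro rfl
      exact hts (huv ▸ le_self_add)
    rw [coeff_mono, if_neg hut, zero_mul, zero_mul]

end Stmt0Aux
namespace Stmt0Aux

section Noeth

variable {k : Type*} [Field k] {n : ℕ} {Q : QMatrix k n}
variable {R : Type*} [Ring R] [Algebra k R]
variable (h : IsQPowerSeriesRing Q R) (B : Finset (Fin n →₀ ℕ)) (gen : (Fin n →₀ ℕ) → R)

/-- selected basis element below the leading monomial -/
def bsel (r : R) : Fin n →₀ ℕ :=
  @dite _ (∃ b, b ∈ B ∧ b ≤ ltm h r) (Classical.dec _) (fun hx => hx.choose) (fun _ => 0)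

/-- the complementary monomial -/
def tsel (r : R) : Fin n →₀ ℕ := ltm h r - bsel h B r

/-- the correcting coefficient -/
def csel (r : R) : k :=
  h.coeff r (ltm h r) *
    (h.coeff (gen (bsel h B r)) (bsel h B r) * Q.weight (tsel h B r) (bsel h B r))⁻¹

/-- the term subtracted at each reduction step -/
def termF (r : R) : R :=
  @ite _ (r = 0) (Classical.dec _) 0 (csel h B gen r • (h.mono (tsel h B r) * gen (bsel h B r)))

/-- the sequence of remainders -/
def rem (g : R) : ℕ → R
  | 0 => g
  | (m + 1) => rem g m - termF h B gen (rem g m)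

variable {I : Submodule R R}
variable (hgen : ∀ b ∈ B, gen b ∈ I ∧ gen b ≠ 0 ∧ ltm h (gen b) = b)
variable (hmin : ∀ r ∈ I, r ≠ 0 → ∃ b ∈ B, b ≤ ltm h r)

section Lemmas

include hmin in
lemma bsel_spec {r : R} (hr : r ∈ I) (hr0 : r ≠ 0) :
    bsel h B r ∈ B ∧ bsel h B r ≤ ltm h r := by
  have hx : ∃ b, b ∈ B ∧ b ≤ ltm h r := by
    obtain ⟨b, hb1, hb2⟩ := hmin r hr hr0
    exact ⟨b, hb1, hb2⟩
  rw [bsel, dif_pos hx]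
  exact hx.choose_spec

include hmin in
lemma tsel_add_bsel {r : R} (hr : r ∈ I) (hr0 : r ≠ 0) :
    tsel h B r + bsel h B r = ltm h r := by
  rw [tsel]
  exact tsub_add_cancel_of_le (bsel_spec h B hmin hr hr0).2

include hgen hmin in
lemma coeff_termF_ne_zero {r : R} (hr : r ∈ I) (hr0 : r ≠ 0) {s : Fin n →₀ ℕ}
    (hs : h.coeff (termF h B gen r) s ≠ 0) : phi (ltm h r) ≤ phi s := by
  rw [termF, if_neg hr0, coeff_smul, coeff_mono_mul] at hs
  by_cases hts : tsel h B r ≤ s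
  · rw [if_pos hts] at hs
    have hg : h.coeff (gen (bsel h B r)) (s - tsel h B r) ≠ 0 := by
      intro h0; rw [h0] at hs; simp at hs
    have hb := (hgen _ (bsel_spec h B hmin hr hr0).1)
    have hlt : phi (bsel h B r) ≤ phi (s - tsel h B r) := by
      have := ltm_min h hb.2.1 hg
      rwa [hb.2.2] at this
    calc phi (ltm h r) = phi (tsel h B r + bsel h B r) := by
          rw [tsel_add_bsel h B hmin hr hr0]
    _ ≤ phi (tsel h B r + (s - tsel h B r)) := phi_add_le_add le_rfl hlt
    _ = phi s := by rw [add_tsub_cancel_of_le hts]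
  · rw [if_neg hts] at hs
    simp at hs

include hgen hmin in
lemma coeff_termF_ltm {r : R} (hr : r ∈ I) (hr0 : r ≠ 0) :
    h.coeff (termF h B gen r) (ltm h r) = h.coeff r (ltm h r) := by
  have hb := hgen _ (bsel_spec h B hmin hr hr0).1
  have hble := (bsel_spec h B hmin hr hr0).2
  have hts : tsel h B r ≤ ltm h r := tsub_le_self
  rw [termF, if_neg hr0, coeff_smul, coeff_mono_mul, if_pos hts]
  have hsub : ltm h r - tsel h B r = bsel h B r := tsub_tsub_cancel_of_le hble
  rw [hsub, csel]
  have hne : h.coeff (gen (bsel h B r)) (bsel h B r) * Q.weight (tsel h B r) (bsel h B r) ≠ 0 := by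
    apply mul_ne_zero _ (weight_ne_zero Q _ _)
    have := coeff_ltm_ne_zero h hb.2.1
    rwa [hb.2.2] at this
  rw [mul_assoc, inv_mul_cancel₀ hne, mul_one]

include hgen hmin in
lemma termF_mem {r : R} (hr : r ∈ I) : termF h B gen r ∈ I := by
  by_cases hr0 : r = 0
  · rw [termF, if_pos hr0]; exact I.zero_mem
  · rw [termF, if_neg hr0]
    have : gen (bsel h B r) ∈ I := (hgen _ (bsel_spec h B hmin hr hr0).1).1
    have h1 : h.mono (tsel h B r) * gen (bsel h B r) ∈ I := I.smul_mem _ this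
    have h2 : csel h B gen r • (h.mono (tsel h B r) * gen (bsel h B r)) =
        (csel h B gen r • (1 : R)) • (h.mono (tsel h B r) * gen (bsel h B r)) := by
      rw [smul_assoc, one_smul]
    rw [h2]
    exact I.smul_mem _ h1

include hgen hmin in
lemma rem_mem (g : R) (hg : g ∈ I) : ∀ m, rem h B gen g m ∈ I := by
  intro m
  induction m with
  | zero => exact hg
  | succ m ih => exact I.sub_mem ih (termF_mem h B gen hgen hmin ih)

lemma rem_zero_succ (g : R) {m : ℕ} (hm : rem h B gen g m = 0) :
    rem h B gen g (m + 1) = 0 := by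
  rw [rem, hm, termF, if_pos rfl, sub_zero]

include hgen hmin in
lemma rem_succ_coeff (g : R) (hg : g ∈ I) {m : ℕ} (hm : rem h B gen g m ≠ 0) :
    ∀ s, phi s ≤ phi (ltm h (rem h B gen g m)) → h.coeff (rem h B gen g (m + 1)) s = 0 := by
  intro s hs
  have hmem := rem_mem h B gen hgen hmin g hg m
  rw [rem, map_sub, Pi.sub_apply]
  rcases lt_or_eq_of_le hs with hs | hs
  · rw [coeff_eq_zero_of_lt h hs, sub_eq_zero]
    by_contra hc
    exact absurd (coeff_termF_ne_zero h B gen hgen hmin hmem hm (fun h0 => hc h0.symm))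
      (not_le.mpr hs)
  · have : s = ltm h (rem h B gen g m) := phi_injective hs
    subst this
    rw [coeff_termF_ltm h B gen hgen hmin hmem hm, sub_self]

include hgen hmin in
lemma rem_ltm_lt (g : R) (hg : g ∈ I) {m : ℕ} (hm : rem h B gen g (m + 1) ≠ 0) :
    rem h B gen g m ≠ 0 ∧
      phi (ltm h (rem h B gen g m)) < phi (ltm h (rem h B gen g (m + 1))) := by
  have hm0 : rem h B gen g m ≠ 0 := fun h0 => hm (rem_zero_succ h B gen g h0)
  refine ⟨hm0, ?_⟩
  by_contra hc
  push_neg at hc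
  exact coeff_ltm_ne_zero h hm
    (rem_succ_coeff h B gen hgen hmin g hg hm0 _ hc)

include hgen hmin in
/-- the cardinality bound -/
lemma rem_card (g : R) (hg : g ∈ I) :
    ∀ m, rem h B gen g m ≠ 0 →
      m + 1 ≤ ((finite_phi_le (ltm h (rem h B gen g m))).toFinset).card := by
  intro m
  induction m with
  | zero =>
    intro hm
    have : ltm h (rem h B gen g 0) ∈ (finite_phi_le (ltm h (rem h B gen g 0))).toFinset := by
      simp
    exact Finset.card_pos.mpr ⟨_, this⟩
  | succ m ih =>
    intro hm
    obtain ⟨hm0, hlt⟩ := rem_ltm_lt h B gen hgen hmin g hg hm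
    have hsub : (finite_phi_le (ltm h (rem h B gen g m))).toFinset ⊂
        (finite_phi_le (ltm h (rem h B gen g (m + 1)))).toFinset := by
      constructor
      · intro t ht
        simp only [Set.Finite.mem_toFinset, Set.mem_setOf_eq] at ht ⊢
        exact le_trans ht hlt.le
      · intro hcon
        have : ltm h (rem h B gen g (m + 1)) ∈
            (finite_phi_le (ltm h (rem h B gen g (m + 1)))).toFinset := by simp
        have := hcon this
        simp only [Set.Finite.mem_toFinset, Set.mem_setOf_eq] at this
        exact absurd hlt (not_lt.mpr this)
    calc m + 1 + 1 ≤ (finite_phi_le (ltm h (rem h B gen g m))).toFinset.card + 1 :=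
          Nat.add_le_add_right (ih hm0) 1
    _ ≤ _ := Nat.succ_le_of_lt (Finset.card_lt_card hsub)

include hgen hmin in
lemma rem_coeff_vanish (g : R) (hg : g ∈ I) (s : Fin n →₀ ℕ) {m : ℕ}
    (hm : (finite_phi_le s).toFinset.card < m) : h.coeff (rem h B gen g m) s = 0 := by
  by_cases hm0 : rem h B gen g m = 0
  · rw [hm0]; simp
  · by_contra hc
    have h1 := ltm_min h hm0 hc
    have h2 := rem_card h B gen hgen hmin g hg m hm0
    have hsub : (finite_phi_le (ltm h (rem h B gen g m))).toFinset ⊆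
        (finite_phi_le s).toFinset := by
      intro t ht
      simp only [Set.Finite.mem_toFinset, Set.mem_setOf_eq] at ht ⊢
      exact le_trans ht h1
    have := Finset.card_le_card hsub
    omega

lemma rem_telescope (g : R) (s : Fin n →₀ ℕ) (m : ℕ) :
    h.coeff g s = (∑ j ∈ Finset.range m, h.coeff (termF h B gen (rem h B gen g j)) s) +
      h.coeff (rem h B gen g m) s := by
  induction m with
  | zero => simp [rem]
  | succ m ih =>
    rw [Finset.sum_range_succ, ih]
    have : rem h B gen g (m+1) = rem h B gen g m - termF h B gen (rem h B gen g m) := rfl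
    rw [this, map_sub, Pi.sub_apply]
    ring

include hgen hmin in
lemma rem_chain (g : R) (hg : g ∈ I) :
    ∀ j j', j < j' → rem h B gen g j' ≠ 0 →
      phi (ltm h (rem h B gen g j)) < phi (ltm h (rem h B gen g j')) := by
  intro j j' hjj hj'
  induction j' with
  | zero => omega
  | succ j' ih =>
    obtain ⟨hj'0, hlt⟩ := rem_ltm_lt h B gen hgen hmin g hg hj'
    rcases Nat.lt_succ_iff_lt_or_eq.mp hjj with hc | hc
    · exact lt_trans (ih hc hj'0) hlt
    · subst hc; exact hlt

include hgen hmin in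
lemma rem_uniq (g : R) (hg : g ∈ I) {j j' : ℕ}
    (hj : rem h B gen g j ≠ 0) (hj' : rem h B gen g j' ≠ 0)
    (hb : bsel h B (rem h B gen g j) = bsel h B (rem h B gen g j'))
    (ht : tsel h B (rem h B gen g j) = tsel h B (rem h B gen g j')) : j = j' := by
  have he : ltm h (rem h B gen g j) = ltm h (rem h B gen g j') := by
    rw [← tsel_add_bsel h B hmin (rem_mem h B gen hgen hmin g hg j) hj,
      ← tsel_add_bsel h B hmin (rem_mem h B gen hgen hmin g hg j') hj', hb, ht]
  by_contra hne
  rcases Nat.lt_or_ge j j' with hc | hc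
  · exact absurd (rem_chain h B gen hgen hmin g hg j j' hc hj') (by rw [he]; exact lt_irrefl _)
  · have hc' : j' < j := by omega
    exact absurd (rem_chain h B gen hgen hmin g hg j' j hc' hj) (by rw [he]; exact lt_irrefl _)

end Lemmas

end Noeth

end Stmt0Aux
namespace Stmt0Aux

variable {k : Type*} [Field k] {n : ℕ} {Q : QMatrix k n}
variable {R : Type*} [Ring R] [Algebra k R]
variable (h : IsQPowerSeriesRing Q R)

set_option maxHeartbeats 1600000 in
include h in
theorem isNoetherianRing_of_qpsr : IsNoetherianRing R := by
  rw [isNoetherianRing_iff, isNoetherian_def]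
  intro I
  classical
  obtain ⟨B, hBS, hBmin⟩ := dickson {s : Fin n →₀ ℕ | ∃ f, f ∈ I ∧ f ≠ 0 ∧ ltm h f = s}
  have hsel : ∀ b ∈ B, ∃ f, f ∈ I ∧ f ≠ 0 ∧ ltm h f = b := fun b hb => hBS hb
  choose gen' hgen1 hgen2 hgen3 using hsel
  set gen : (Fin n →₀ ℕ) → R := fun b => if hb : b ∈ B then gen' b hb else 0 with hgendef
  have hgen : ∀ b ∈ B, gen b ∈ I ∧ gen b ≠ 0 ∧ ltm h (gen b) = b := by
    intro b hb
    simp only [hgendef, dif_pos hb]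
    exact ⟨hgen1 b hb, hgen2 b hb, hgen3 b hb⟩
  have hmin : ∀ r ∈ I, r ≠ 0 → ∃ b ∈ B, b ≤ ltm h r := by
    intro r hr hr0
    exact hBmin (ltm h r) ⟨r, hr, hr0, rfl⟩
  refine ⟨B.image gen, le_antisymm ?_ ?_⟩
  · rw [Finset.coe_image, Submodule.span_le]
    rintro x ⟨b, hb, rfl⟩
    exact (hgen b (Finset.mem_coe.mp hb)).1
  · intro g hg
    set hfun : (Fin n →₀ ℕ) → (Fin n →₀ ℕ) → k := fun b u =>
      if hx : ∃ m, rem h B gen g m ≠ 0 ∧ bsel h B (rem h B gen g m) = b ∧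
          tsel h B (rem h B gen g m) = u
      then csel h B gen (rem h B gen g hx.choose) else 0 with hfundef
    have hprop : ∀ b u, hfun b u ≠ 0 → ∃ m, rem h B gen g m ≠ 0 ∧
        bsel h B (rem h B gen g m) = b ∧ tsel h B (rem h B gen g m) = u := by
      intro b u hne
      by_contra hc
      rw [hfundef] at hne
      simp only [dif_neg hc] at hne
      exact hne rfl
    have hfunval : ∀ (j : ℕ), rem h B gen g j ≠ 0 →
        hfun (bsel h B (rem h B gen g j)) (tsel h B (rem h B gen g j)) =
          csel h B gen (rem h B gen g j) := by
      intro j hj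
      have hx : ∃ m, rem h B gen g m ≠ 0 ∧
          bsel h B (rem h B gen g m) = bsel h B (rem h B gen g j) ∧
          tsel h B (rem h B gen g m) = tsel h B (rem h B gen g j) := ⟨j, hj, rfl, rfl⟩
      rw [hfundef]
      simp only [dif_pos hx]
      have := hx.choose_spec
      have hjj : hx.choose = j := rem_uniq h B gen hgen hmin g hg this.1 hj this.2.1 this.2.2
      rw [hjj]
    have key : ∀ s, h.coeff g s =
        ∑ b ∈ B, h.coeff (h.coeff.symm (hfun b) * gen b) s := by
      intro s
      set m₀ : ℕ := (finite_phi_le s).toFinset.card + 1 with hm₀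
      have hvanish : h.coeff (rem h B gen g m₀) s = 0 :=
        rem_coeff_vanish h B gen hgen hmin g hg s (by omega)
      have htel := rem_telescope h B gen g s m₀
      rw [hvanish, add_zero] at htel
      rw [htel]
      have hterm_val : ∀ j : ℕ, rem h B gen g j ≠ 0 → tsel h B (rem h B gen g j) ≤ s →
          h.coeff (termF h B gen (rem h B gen g j)) s =
            csel h B gen (rem h B gen g j) *
              (h.coeff (gen (bsel h B (rem h B gen g j))) (s - tsel h B (rem h B gen g j)) *
                Q.weight (tsel h B (rem h B gen g j)) (s - tsel h B (rem h B gen g j))) := by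
        intro j hj hts
        rw [termF, if_neg hj, coeff_smul, coeff_mono_mul, if_pos hts]
      set jsel : (Fin n →₀ ℕ) → (Fin n →₀ ℕ) → ℕ := fun b u =>
        if hx : ∃ m, rem h B gen g m ≠ 0 ∧ bsel h B (rem h B gen g m) = b ∧
            tsel h B (rem h B gen g m) = u
        then hx.choose else 0 with hjseldef
      have hjsel : ∀ b u, hfun b u ≠ 0 →
          rem h B gen g (jsel b u) ≠ 0 ∧ bsel h B (rem h B gen g (jsel b u)) = b ∧
            tsel h B (rem h B gen g (jsel b u)) = u := by
        intro b u hne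
        have hx := hprop b u hne
        rw [hjseldef]
        simp only [dif_pos hx]
        exact hx.choose_spec
      have hjselval : ∀ b u, hfun b u ≠ 0 →
          hfun b u = csel h B gen (rem h B gen g (jsel b u)) := by
        intro b u hne
        have hx := hprop b u hne
        rw [hfundef, hjseldef]
        simp only [dif_pos hx]
      have hcsel_ne : ∀ j : ℕ, rem h B gen g j ≠ 0 → csel h B gen (rem h B gen g j) ≠ 0 := by
        intro j hj0
        have hjI := rem_mem h B gen hgen hmin g hg j
        have hbB := (bsel_spec h B hmin hjI hj0).1
        have hX : h.coeff (gen (bsel h B (rem h B gen g j))) (bsel h B (rem h B gen g j)) *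
            Q.weight (tsel h B (rem h B gen g j)) (bsel h B (rem h B gen g j)) ≠ 0 := by
          apply mul_ne_zero _ (weight_ne_zero Q _ _)
          have := coeff_ltm_ne_zero h (hgen _ hbB).2.1
          rwa [(hgen _ hbB).2.2] at this
        exact mul_ne_zero (coeff_ltm_ne_zero h hj0) (inv_ne_zero hX)
      have hjsel_eq : ∀ j : ℕ, rem h B gen g j ≠ 0 →
          jsel (bsel h B (rem h B gen g j)) (tsel h B (rem h B gen g j)) = j := by
        intro j hj0
        have hne : hfun (bsel h B (rem h B gen g j)) (tsel h B (rem h B gen g j)) ≠ 0 := by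
          rw [hfunval j hj0]
          exact hcsel_ne j hj0
        obtain ⟨h1, h2, h3⟩ := hjsel _ _ hne
        exact rem_uniq h B gen hgen hmin g hg h1 hj0 h2 h3
      have hbij : ∑ p ∈ B ×ˢ Finset.HasAntidiagonal.antidiagonal s,
          hfun p.1 p.2.1 * h.coeff (gen p.1) p.2.2 * Q.weight p.2.1 p.2.2 =
          ∑ j ∈ Finset.range m₀, h.coeff (termF h B gen (rem h B gen g j)) s := by
        refine Finset.sum_bij_ne_zero (fun p _ _ => jsel p.1 p.2.1) ?_ ?_ ?_ ?_
        · -- membership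
          rintro ⟨b, u, v⟩ hp hF
          beta_reduce
          have hfne : hfun b u ≠ 0 := fun h0 => hF (by rw [h0, zero_mul, zero_mul])
          obtain ⟨hj0, hjb, hju⟩ := hjsel b u hfne
          set j := jsel b u
          rw [Finset.mem_range]
          rw [Finset.mem_product, Finset.HasAntidiagonal.mem_antidiagonal] at hp
          have hgv : h.coeff (gen b) v ≠ 0 := fun h0 => hF (by rw [h0, mul_zero, zero_mul])
          have hbB : b ∈ B := hp.1
          have hphi : phi (ltm h (rem h B gen g j)) ≤ phi s := by
            have h1 : phi b ≤ phi v := by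
              have := ltm_min h (hgen b hbB).2.1 hgv
              rwa [(hgen b hbB).2.2] at this
            have h2 : ltm h (rem h B gen g j) = u + b := by
              rw [← tsel_add_bsel h B hmin (rem_mem h B gen hgen hmin g hg j) hj0, hjb, hju]
            rw [h2, ← hp.2]
            exact phi_add_le_add le_rfl h1
          have hcard := rem_card h B gen hgen hmin g hg j hj0
          have hsub : (finite_phi_le (ltm h (rem h B gen g j))).toFinset ⊆
              (finite_phi_le s).toFinset := by
            intro t ht
            simp only [Set.Finite.mem_toFinset, Set.mem_setOf_eq] at ht ⊢
            exact le_trans ht hphi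
          have := Finset.card_le_card hsub
          omega
        · -- injectivity
          rintro ⟨b₁, u₁, v₁⟩ hp₁ hF₁ ⟨b₂, u₂, v₂⟩ hp₂ hF₂ hij
          have hfne₁ : hfun b₁ u₁ ≠ 0 := fun h0 => hF₁ (by rw [h0, zero_mul, zero_mul])
          have hfne₂ : hfun b₂ u₂ ≠ 0 := fun h0 => hF₂ (by rw [h0, zero_mul, zero_mul])
          obtain ⟨hj₁0, hj₁b, hj₁u⟩ := hjsel b₁ u₁ hfne₁
          obtain ⟨hj₂0, hj₂b, hj₂u⟩ := hjsel b₂ u₂ hfne₂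
          have hij' : jsel b₁ u₁ = jsel b₂ u₂ := hij
          have hb : b₁ = b₂ := by rw [← hj₁b, ← hj₂b, hij']
          have hu : u₁ = u₂ := by rw [← hj₁u, ← hj₂u, hij']
          rw [Finset.mem_product, Finset.HasAntidiagonal.mem_antidiagonal] at hp₁ hp₂
          have hv : v₁ = v₂ := by
            have h12 := hp₁.2.trans hp₂.2.symm
            rw [hu] at h12
            exact add_left_cancel h12
          rw [Prod.ext_iff, Prod.ext_iff]
          exact ⟨hb, hu, hv⟩
        · -- surjectivity
          intro j hj hG
          have hj0 : rem h B gen g j ≠ 0 := by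
            intro h0
            rw [h0] at hG
            rw [termF, if_pos rfl, map_zero] at hG
            exact hG rfl
          have hjI := rem_mem h B gen hgen hmin g hg j
          have hts : tsel h B (rem h B gen g j) ≤ s := by
            by_contra hc
            rw [termF, if_neg hj0, coeff_smul, coeff_mono_mul, if_neg hc, mul_zero] at hG
            exact hG rfl
          have hGval := hterm_val j hj0 hts
          have hfne : hfun (bsel h B (rem h B gen g j)) (tsel h B (rem h B gen g j)) ≠ 0 := by
            rw [hfunval j hj0]
            intro hc
            rw [hGval, hc, zero_mul] at hG
            exact hG rfl
          refine ⟨(bsel h B (rem h B gen g j), (tsel h B (rem h B gen g j),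
            s - tsel h B (rem h B gen g j))), ?_, ?_, ?_⟩
          · rw [Finset.mem_product, Finset.HasAntidiagonal.mem_antidiagonal]
            exact ⟨(bsel_spec h B hmin hjI hj0).1, add_tsub_cancel_of_le hts⟩
          · intro hc
            rw [hfunval j hj0] at hc
            rw [hGval, ← mul_assoc] at hG
            exact hG hc
          · exact hjsel_eq j hj0
        · -- values
          rintro ⟨b, u, v⟩ hp hF
          beta_reduce
          have hfne : hfun b u ≠ 0 := fun h0 => hF (by rw [h0, zero_mul, zero_mul])
          obtain ⟨hj0, hjb, hju⟩ := hjsel b u hfne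
          set j := jsel b u
          rw [Finset.mem_product, Finset.HasAntidiagonal.mem_antidiagonal] at hp
          have hts : tsel h B (rem h B gen g j) ≤ s := by rw [hju, ← hp.2]; exact le_self_add
          rw [hterm_val j hj0 hts]
          have hsv : s - tsel h B (rem h B gen g j) = v := by
            rw [hju, ← hp.2, add_tsub_cancel_left]
          rw [hsv, hjb, hju, hjselval b u hfne, mul_assoc]
      rw [← hbij, Finset.sum_product]
      refine Finset.sum_congr rfl (fun b hb => ?_)
      rw [h.coeff_mul]
      refine Finset.sum_congr rfl (fun uv huv => ?_)
      rw [LinearEquiv.apply_symm_apply]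
    have keyg : g = ∑ b ∈ B, h.coeff.symm (hfun b) * gen b := by
      apply h.coeff.injective
      ext s
      rw [map_sum]
      rw [Finset.sum_apply]
      exact key s
    rw [keyg]
    refine Submodule.sum_mem _ (fun b hb => ?_)
    have hmem : gen b ∈ Submodule.span R (↑(B.image gen) : Set R) :=
      Submodule.subset_span (Finset.mem_coe.mpr (Finset.mem_image_of_mem gen hb))
    simpa [smul_eq_mul] using Submodule.smul_mem _ (h.coeff.symm (hfun b)) hmem

end Stmt0Aux
namespace Stmt0Aux

variable {k : Type*} [Field k] {n : ℕ}

/-- transpose of a `QMatrix` -/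
def Qt (Q : QMatrix k n) : QMatrix k n where
  q i j := Q.q j i
  diag i := Q.diag i
  antisym i j := Q.antisym j i

/-- the 2-cocycle normalization `μ(s) = ∏_{j<i} q_{ji}^{s_i s_j}` -/
def mu (Q : QMatrix k n) (s : Fin n →₀ ℕ) : k :=
  ∏ i : Fin n, ∏ j : Fin n, if j < i then Q.q j i ^ (s i * s j) else 1

lemma mu_ne_zero (Q : QMatrix k n) (s : Fin n →₀ ℕ) : mu Q s ≠ 0 := by
  unfold mu
  rw [Finset.prod_ne_zero_iff]
  intro i _
  rw [Finset.prod_ne_zero_iff]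
  intro j _
  split
  · exact pow_ne_zero _ (Q.q_ne_zero j i)
  · exact one_ne_zero

lemma mu_zero (Q : QMatrix k n) : mu Q 0 = 1 := by
  unfold mu
  refine Finset.prod_eq_one fun i _ => Finset.prod_eq_one fun j _ => ?_
  split <;> simp

lemma mu_key (Q : QMatrix k n) (u v : Fin n →₀ ℕ) :
    mu Q (u + v) * Q.weight v u = mu Q u * mu Q v * (Qt Q).weight u v := by
  unfold mu QMatrix.weight Qt
  simp only
  rw [← Finset.prod_mul_distrib, ← Finset.prod_mul_distrib, ← Finset.prod_mul_distrib]
  refine Finset.prod_congr rfl fun i _ => ?_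
  rw [← Finset.prod_mul_distrib, ← Finset.prod_mul_distrib, ← Finset.prod_mul_distrib]
  refine Finset.prod_congr rfl fun j _ => ?_
  split_ifs with hji
  · -- q_{ji}^{(u+v)_i (u+v)_j} * q_{ij}^{v_i u_j}
    --   = q_{ji}^{u_i u_j} * q_{ji}^{v_i v_j} * q_{ji}^{u_i v_j}
    have hA : Q.q j i ≠ 0 := Q.q_ne_zero j i
    have hinv : Q.q i j = (Q.q j i)⁻¹ := eq_inv_of_mul_eq_one_left (Q.antisym i j)
    rw [Finsupp.add_apply, Finsupp.add_apply, hinv, inv_pow,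
      show (u i + v i) * (u j + v j) = u i * u j + v i * v j + u i * v j + v i * u j by ring,
      pow_add, pow_add, pow_add]
    rw [mul_inv_cancel_right₀ (pow_ne_zero _ hA)]
  · simp

variable {Q : QMatrix k n} {R : Type*} [Ring R] [Algebra k R]

/-- the coefficient linear equivalence for the opposite ring -/
def opCoeff (h : IsQPowerSeriesRing Q R) : Rᵐᵒᵖ ≃ₗ[k] ((Fin n →₀ ℕ) → k) where
  toFun f := fun s => mu Q s * h.coeff f.unop s
  map_add' f g := by
    ext s
    simp only [MulOpposite.unop_add, map_add, Pi.add_apply]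
    ring
  map_smul' c f := by
    ext s
    simp only [MulOpposite.unop_smul, map_smul, Pi.smul_apply, smul_eq_mul, RingHom.id_apply]
    ring
  invFun c := MulOpposite.op (h.coeff.symm (fun s => (mu Q s)⁻¹ * c s))
  left_inv f := by
    apply MulOpposite.unop_injective
    rw [MulOpposite.unop_op]
    have : (fun s => (mu Q s)⁻¹ * (mu Q s * h.coeff f.unop s)) = h.coeff f.unop := by
      ext s
      rw [inv_mul_cancel_left₀ (mu_ne_zero Q s)]
    rw [this, LinearEquiv.symm_apply_apply]
  right_inv c := by
    ext s
    simp only [MulOpposite.unop_op, LinearEquiv.apply_symm_apply]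
    rw [mul_inv_cancel_left₀ (mu_ne_zero Q s)]

/-- the opposite ring of a `q`-power series ring is a `qᵀ`-power series ring -/
def opStructure (h : IsQPowerSeriesRing Q R) : IsQPowerSeriesRing (Qt Q) Rᵐᵒᵖ where
  coeff := opCoeff h
  coeff_one := by
    intro s
    show mu Q s * h.coeff (MulOpposite.unop 1) s = _
    rw [MulOpposite.unop_one, h.coeff_one]
    split_ifs with hs
    · subst hs; rw [mu_zero, one_mul]
    · rw [mul_zero]
  coeff_mul := by
    intro f g s
    show mu Q s * h.coeff ((f * g).unop) s = _
    have hunop : (f * g).unop = g.unop * f.unop := rfl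
    rw [hunop, h.coeff_mul, Finset.mul_sum]
    have hswap : ∀ (F : (Fin n →₀ ℕ) × (Fin n →₀ ℕ) → k),
        ∑ uv ∈ Finset.HasAntidiagonal.antidiagonal s, F uv = ∑ uv ∈ Finset.HasAntidiagonal.antidiagonal s, F uv.swap := by
      intro F
      conv_lhs => rw [← Finset.HasAntidiagonal.map_swap_antidiagonal (n := s)]
      rw [Finset.sum_map]
      rfl
    rw [hswap (fun uv => mu Q s *
      (h.coeff g.unop uv.1 * h.coeff f.unop uv.2 * Q.weight uv.1 uv.2))]
    refine Finset.sum_congr rfl fun uv huv => ?_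
    rw [Finset.HasAntidiagonal.mem_antidiagonal] at huv
    have hk := mu_key Q uv.1 uv.2
    show mu Q s * (h.coeff g.unop uv.2 * h.coeff f.unop uv.1 * Q.weight uv.2 uv.1) = _
    show _ = mu Q uv.1 * h.coeff f.unop uv.1 * (mu Q uv.2 * h.coeff g.unop uv.2) *
      (Qt Q).weight uv.1 uv.2
    rw [← huv]
    linear_combination (h.coeff g.unop uv.2 * h.coeff f.unop uv.1) * hk

end Stmt0Aux

/-- The `q`-commutative power series ring `R = k_q[[x_1,…,x_n]]` is a
left and right noetherian integral domain (it has no zero divisors). -/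
theorem stmt_0 {k : Type*} [Field k] {n : ℕ} (hn : 0 < n) (Q : QMatrix k n)
    (R : Type*) [Ring R] [Algebra k R] (h : IsQPowerSeriesRing Q R) :
    IsNoetherianRing R ∧ IsNoetherianRing Rᵐᵒᵖ ∧ IsDomain R :=
  ⟨Stmt0Aux.isNoetherianRing_of_qpsr h,
   Stmt0Aux.isNoetherianRing_of_qpsr (Stmt0Aux.opStructure h),
   Stmt0Aux.isDomain_of_qpsr h⟩

end
end

section
/- If P is a prime two-sided ideal of R = k_q[[x_1,…,x_n]], then P ∩ k_q[x] is a prime two-sided ideal of the polynomial subalgebra k_q[x]. -/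
/-!
Common setup: `q`-commutative power series ring `R = k_q[[x_1,…,x_n]]` and
`q`-commutative Laurent series ring `L = k_q[[x_1^{±1},…,x_n^{±1}]]`, characterized
by their coefficient descriptions (twisted convolution multiplication).
-/

noncomputable section

open Classical in
/-- The polynomial subalgebra `k_q[x_1,…,x_n]` of `R`: series with finite support. -/
def IsQPowerSeriesRing.polySubalgebra {k : Type*} [Field k] {n : ℕ} {Q : QMatrix k n}
    {R : Type*} [Ring R] [Algebra k R] (h : IsQPowerSeriesRing Q R) : Subalgebra k R where
  carrier := {f : R | (Function.support (h.coeff f)).Finite}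
  add_mem' := by
    intro a b ha hb
    refine Set.Finite.subset (ha.union hb) ?_
    intro s hs
    simp only [Set.mem_setOf_eq, Function.mem_support, map_add, Pi.add_apply] at hs ha hb ⊢
    by_contra hc
    simp only [Set.mem_union, Function.mem_support, not_or, not_not] at hc
    rw [hc.1, hc.2, add_zero] at hs
    exact hs rfl
  mul_mem' := by
    intro a b ha hb
    refine Set.Finite.subset (Set.Finite.add ha hb) ?_
    intro s hs
    simp only [Set.mem_setOf_eq, Function.mem_support] at hs
    rw [h.coeff_mul a b s] at hs
    obtain ⟨uv, huv, hne⟩ := Finset.exists_ne_zero_of_sum_ne_zero hs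
    have h1 : h.coeff a uv.1 ≠ 0 := fun h0 => hne (by rw [h0, zero_mul, zero_mul])
    have h2 : h.coeff b uv.2 ≠ 0 := fun h0 => hne (by rw [h0, mul_zero, zero_mul])
    exact Set.mem_add.mpr ⟨uv.1, h1, uv.2, h2, Finset.HasAntidiagonal.mem_antidiagonal.mp huv⟩
  algebraMap_mem' := by
    intro c
    refine Set.Finite.subset (Set.finite_singleton 0) ?_
    intro s hs
    simp only [Function.mem_support] at hs
    rw [Algebra.algebraMap_eq_smul_one, map_smul, Pi.smul_apply, h.coeff_one s] at hs
    simp only [Set.mem_singleton_iff]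
    by_contra hc
    rw [if_neg hc] at hs
    simp at hs

/-! ### Auxiliary material for Statement 3 -/

section Stmt3Aux

open Finset

variable {k : Type*} [Field k] {n : ℕ} {Q : QMatrix k n}

lemma QMatrix.weight_ne_zero (u v : Fin n →₀ ℕ) : Q.weight u v ≠ 0 := by
  unfold QMatrix.weight
  rw [Finset.prod_ne_zero_iff]
  intro i _
  rw [Finset.prod_ne_zero_iff]
  intro j _
  split
  · exact pow_ne_zero _ (Q.q_ne_zero i j)
  · exact one_ne_zero

lemma QMatrix.weight_add_left (u v t : Fin n →₀ ℕ) :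
    Q.weight (u + v) t = Q.weight u t * Q.weight v t := by
  unfold QMatrix.weight
  rw [← Finset.prod_mul_distrib]
  refine Finset.prod_congr rfl fun i _ => ?_
  rw [← Finset.prod_mul_distrib]
  refine Finset.prod_congr rfl fun j _ => ?_
  split
  · rw [Finsupp.add_apply, add_mul, pow_add]
  · rw [one_mul]

lemma QMatrix.weight_add_right (u v t : Fin n →₀ ℕ) :
    Q.weight u (v + t) = Q.weight u v * Q.weight u t := by
  unfold QMatrix.weight
  rw [← Finset.prod_mul_distrib]
  refine Finset.prod_congr rfl fun i _ => ?_
  rw [← Finset.prod_mul_distrib]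
  refine Finset.prod_congr rfl fun j _ => ?_
  split
  · rw [Finsupp.add_apply, mul_add, pow_add]
  · rw [one_mul]

/-- The ℕ-version of the bicharacter `σ`: `x^s x^t = qsig s t • x^t x^s`. -/
def QMatrix.qsig (Q : QMatrix k n) (s t : Fin n →₀ ℕ) : k :=
  Q.weight s t * (Q.weight t s)⁻¹

lemma QMatrix.qsig_mul_weight (s t : Fin n →₀ ℕ) :
    Q.qsig s t * Q.weight t s = Q.weight s t := by
  unfold QMatrix.qsig
  rw [mul_assoc, inv_mul_cancel₀ (Q.weight_ne_zero t s), mul_one]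

lemma QMatrix.qsig_ne_zero (s t : Fin n →₀ ℕ) : Q.qsig s t ≠ 0 :=
  mul_ne_zero (Q.weight_ne_zero s t) (inv_ne_zero (Q.weight_ne_zero t s))

variable {R : Type*} [Ring R] [Algebra k R] (h : IsQPowerSeriesRing Q R)

namespace IsQPowerSeriesRing

lemma coeff_mono (s t : Fin n →₀ ℕ) :
    h.coeff (h.mono s) t = if t = s then 1 else 0 := by
  unfold mono; rw [h.coeff.apply_symm_apply]

lemma coeff_mul_mono (g : R) (p s : Fin n →₀ ℕ) :
    h.coeff (g * h.mono p) s =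
      if p ≤ s then h.coeff g (s - p) * Q.weight (s - p) p else 0 := by
  rw [h.coeff_mul]
  by_cases hp : p ≤ s
  · rw [if_pos hp, Finset.sum_eq_single ((s - p, p) : (Fin n →₀ ℕ) × (Fin n →₀ ℕ))]
    · rw [h.coeff_mono, if_pos rfl, mul_one]
    · rintro ⟨u, v⟩ huv hne
      by_cases hv : v = p
      · exfalso; apply hne
        subst hv
        have := Finset.HasAntidiagonal.mem_antidiagonal.mp huv
        have : u = s - v := eq_tsub_of_add_eq this
        simp [this]
      · rw [h.coeff_mono, if_neg hv, mul_zero, zero_mul]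
    · intro habs
      exact absurd (Finset.HasAntidiagonal.mem_antidiagonal.mpr (tsub_add_cancel_of_le hp)) habs
  · rw [if_neg hp]
    apply Finset.sum_eq_zero
    rintro ⟨u, v⟩ huv
    by_cases hv : v = p
    · exfalso
      apply hp
      have := Finset.HasAntidiagonal.mem_antidiagonal.mp huv
      rw [hv] at this
      calc p ≤ u + p := self_le_add_left p u
        _ = s := this
    · rw [h.coeff_mono, if_neg hv, mul_zero, zero_mul]

lemma coeff_mono_mul (g : R) (p s : Fin n →₀ ℕ) :
    h.coeff (h.mono p * g) s =
      if p ≤ s then Q.weight p (s - p) * h.coeff g (s - p) else 0 := by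
  rw [h.coeff_mul]
  by_cases hp : p ≤ s
  · rw [if_pos hp, Finset.sum_eq_single ((p, s - p) : (Fin n →₀ ℕ) × (Fin n →₀ ℕ))]
    · rw [h.coeff_mono, if_pos rfl, one_mul, mul_comm]
    · rintro ⟨u, v⟩ huv hne
      by_cases hu : u = p
      · exfalso; apply hne
        subst hu
        have := Finset.HasAntidiagonal.mem_antidiagonal.mp huv
        have hv : v = s - u := by
          rw [add_comm] at this
          exact eq_tsub_of_add_eq this
        simp [hv]
      · rw [h.coeff_mono, if_neg hu, zero_mul, zero_mul]
    · intro habs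
      refine absurd (Finset.HasAntidiagonal.mem_antidiagonal.mpr ?_) habs
      rw [add_comm]
      exact tsub_add_cancel_of_le hp
  · rw [if_neg hp]
    apply Finset.sum_eq_zero
    rintro ⟨u, v⟩ huv
    by_cases hu : u = p
    · exfalso
      apply hp
      have := Finset.HasAntidiagonal.mem_antidiagonal.mp huv
      rw [hu] at this
      calc p ≤ p + v := le_add_right le_rfl
        _ = s := this
    · rw [h.coeff_mono, if_neg hu, zero_mul, zero_mul]

lemma mono_zero : h.mono 0 = (1 : R) := by
  have : (1 : R) = h.coeff.symm (h.coeff 1) := (h.coeff.symm_apply_apply 1).symm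
  rw [this]
  unfold mono
  congr 1
  funext t
  rw [h.coeff_one]

lemma mono_mul_mono (s t : Fin n →₀ ℕ) :
    h.mono s * h.mono t = Q.weight s t • h.mono (s + t) := by
  apply h.coeff.injective
  funext w
  rw [h.coeff_mul_mono, map_smul, Pi.smul_apply, smul_eq_mul]
  simp only [h.coeff_mono]
  by_cases hw : w = s + t
  · subst hw
    rw [if_pos rfl, mul_one, if_pos (self_le_add_left t s), add_tsub_cancel_right,
      if_pos rfl, one_mul]
  · rw [if_neg hw, mul_zero]
    by_cases ht : t ≤ w
    · rw [if_pos ht, if_neg, zero_mul]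
      intro habs
      exact hw ((tsub_eq_iff_eq_add_of_le ht).mp habs)
    · rw [if_neg ht]

/-- The coefficientwise twist `x^s f x^{-s}`. -/
def twist (s : Fin n →₀ ℕ) (f : R) : R :=
  h.coeff.symm fun t => Q.qsig s t * h.coeff f t

/-- The coefficientwise twist `x^{-s} f x^{s}`. -/
def twist' (s : Fin n →₀ ℕ) (f : R) : R :=
  h.coeff.symm fun t => (Q.qsig s t)⁻¹ * h.coeff f t

lemma coeff_twist (s : Fin n →₀ ℕ) (f : R) (t : Fin n →₀ ℕ) :
    h.coeff (h.twist s f) t = Q.qsig s t * h.coeff f t := by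
  unfold twist; rw [h.coeff.apply_symm_apply]

lemma coeff_twist' (s : Fin n →₀ ℕ) (f : R) (t : Fin n →₀ ℕ) :
    h.coeff (h.twist' s f) t = (Q.qsig s t)⁻¹ * h.coeff f t := by
  unfold twist'; rw [h.coeff.apply_symm_apply]

lemma twist_twist' (s : Fin n →₀ ℕ) (f : R) : h.twist s (h.twist' s f) = f := by
  apply h.coeff.injective
  funext t
  rw [h.coeff_twist, h.coeff_twist', ← mul_assoc,
    mul_inv_cancel₀ (Q.qsig_ne_zero s t), one_mul]

lemma mono_mul_eq (s : Fin n →₀ ℕ) (f : R) :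
    h.mono s * f = h.twist s f * h.mono s := by
  apply h.coeff.injective
  funext w
  rw [h.coeff_mono_mul, h.coeff_mul_mono]
  by_cases hs : s ≤ w
  · rw [if_pos hs, if_pos hs, h.coeff_twist, ← Q.qsig_mul_weight s (w - s)]
    ring
  · rw [if_neg hs, if_neg hs]

lemma mul_mono_eq (s : Fin n →₀ ℕ) (f : R) :
    f * h.mono s = h.mono s * h.twist' s f := by
  conv_lhs => rw [← h.twist_twist' s f]
  rw [← h.mono_mul_eq]

lemma mono_mem_poly (s : Fin n →₀ ℕ) : h.mono s ∈ h.polySubalgebra := by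
  show (Function.support (h.coeff (h.mono s))).Finite
  apply Set.Finite.subset (Set.finite_singleton s)
  intro t ht
  rw [Function.mem_support, h.coeff_mono] at ht
  by_contra hc
  rw [Set.mem_singleton_iff] at hc
  rw [if_neg hc] at ht
  exact ht rfl

lemma prime_point {P : TwoSidedIdeal R} (hP : IsPrimeTwoSided P) {c d : R}
    (hcd : ∀ f : R, c * f * d ∈ P) : c ∈ P ∨ d ∈ P := by
  classical
  let Il : TwoSidedIdeal R := TwoSidedIdeal.mk' {u : R | ∀ f, u * f * d ∈ P}
    (by intro f; rw [zero_mul, zero_mul]; exact P.zero_mem)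
    (by intro x y hx hy f; rw [add_mul, add_mul]; exact P.add_mem (hx f) (hy f))
    (by intro x hx f; rw [neg_mul, neg_mul]; exact P.neg_mem (hx f))
    (by intro x y hy f; rw [mul_assoc x y f, mul_assoc x (y * f) d]
        exact P.mul_mem_left _ _ (hy f))
    (by intro x y hx f; rw [mul_assoc x y f]; exact hx (y * f))
  let Jr : TwoSidedIdeal R := TwoSidedIdeal.mk'
      {v : R | ∀ u : R, (∀ f, u * f * d ∈ P) → u * v ∈ P}
    (by intro u _; rw [mul_zero]; exact P.zero_mem)
    (by intro x y hx hy u hu; rw [mul_add]; exact P.add_mem (hx u hu) (hy u hu))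
    (by intro x hx u hu; rw [mul_neg]; exact P.neg_mem (hx u hu))
    (by intro x y hy u hu
        rw [← mul_assoc]
        refine hy (u * x) (fun f => ?_)
        rw [mul_assoc u x f]
        exact hu (x * f))
    (by intro x y hx u hu
        rw [← mul_assoc]
        exact P.mul_mem_right _ _ (hx u hu))
  have hprod : ∀ a ∈ Il, ∀ b ∈ Jr, a * b ∈ P := by
    intro a ha b hb
    simp only [Il, Jr, TwoSidedIdeal.mem_mk', Set.mem_setOf_eq] at ha hb
    exact hb a ha
  rcases hP.2 Il Jr hprod with h1 | h1
  · refine Or.inl (h1 ?_)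
    simp only [Il, TwoSidedIdeal.mem_mk', Set.mem_setOf_eq]
    exact hcd
  · refine Or.inr (h1 ?_)
    simp only [Jr, TwoSidedIdeal.mem_mk', Set.mem_setOf_eq]
    intro u hu
    have := hu 1
    rwa [mul_one] at this

lemma mono_mem_P_imp {P : TwoSidedIdeal R} (hP : IsPrimeTwoSided P) :
    ∀ u : Fin n →₀ ℕ, h.mono u ∈ P → ∃ i, u i ≠ 0 ∧ h.X i ∈ P := by
  suffices H : ∀ (d : ℕ) (u : Fin n →₀ ℕ), (∑ i, u i) ≤ d → h.mono u ∈ P →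
      ∃ i, u i ≠ 0 ∧ h.X i ∈ P from fun u hu => H (∑ i, u i) u le_rfl hu
  intro d
  induction d with
  | zero =>
    intro u hu hmem
    exfalso
    have h0 : u = 0 := by
      ext i
      have := (Finset.sum_eq_zero_iff.mp (Nat.le_zero.mp hu)) i (Finset.mem_univ i)
      simpa using this
    rw [h0, h.mono_zero] at hmem
    exact hP.1 (P.eq_top hmem)
  | succ d ih =>
    intro u hu hmem
    by_cases h0 : u = 0
    · exfalso
      rw [h0, h.mono_zero] at hmem
      exact hP.1 (P.eq_top hmem)
    · obtain ⟨i, hi⟩ : ∃ i, u i ≠ 0 := by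
        by_contra hc
        push_neg at hc
        exact h0 (Finsupp.ext fun i => hc i)
      set u' := u - Finsupp.single i 1 with hu'
      have hle : Finsupp.single i 1 ≤ u :=
        Finsupp.single_le_iff.mpr (Nat.one_le_iff_ne_zero.mpr hi)
      have hsum : Finsupp.single i 1 + u' = u := add_tsub_cancel_of_le hle
      have hXmul : h.X i * h.mono u' ∈ P := by
        have heq : h.X i * h.mono u' = Q.weight (Finsupp.single i 1) u' • h.mono u := by
          rw [show h.X i = h.mono (Finsupp.single i 1) from rfl, h.mono_mul_mono, hsum]
        rw [heq, Algebra.smul_def]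
        exact P.mul_mem_left _ _ hmem
      have hpp : ∀ f, h.X i * f * h.mono u' ∈ P := by
        intro f
        rw [mul_assoc, h.mul_mono_eq u' f, ← mul_assoc]
        exact P.mul_mem_right _ _ hXmul
      rcases prime_point hP hpp with hXi | hu'mem
      · exact ⟨i, hi, hXi⟩
      · have hsum' : (∑ j, u' j) ≤ d := by
          have hs1 : (∑ j, (Finsupp.single i 1) j) + (∑ j, u' j) = ∑ j, u j := by
            rw [← Finset.sum_add_distrib]
            exact Finset.sum_congr rfl fun j _ => by rw [← Finsupp.add_apply, hsum]
          have hs2 : (∑ j, (Finsupp.single i 1 : Fin n →₀ ℕ) j) = 1 := by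
            simp [Finsupp.single_apply]
          omega
        obtain ⟨j, hj, hXj⟩ := ih u' hsum' hu'mem
        refine ⟨j, ?_, hXj⟩
        have hle' : u' j ≤ u j := by
          rw [hu', Finsupp.tsub_apply]
          exact tsub_le_self
        omega

lemma twist_mem {P : TwoSidedIdeal R} (hP : IsPrimeTwoSided P) {a b : R} {u : Fin n →₀ ℕ}
    (hab : ∀ p : Fin n →₀ ℕ, a * h.mono p * b ∈ P) (hu : ∀ i, u i ≠ 0 → h.X i ∉ P) :
    a * h.twist u b ∈ P := by
  have key : ∀ f : R, (a * h.twist u b) * f * h.mono u ∈ P := by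
    intro f
    have heq : (a * h.twist u b) * f * h.mono u = (a * h.mono u * b) * h.twist' u f := by
      calc a * h.twist u b * f * h.mono u
          = a * h.twist u b * (f * h.mono u) := by rw [mul_assoc]
        _ = a * h.twist u b * (h.mono u * h.twist' u f) := by rw [h.mul_mono_eq]
        _ = a * (h.twist u b * h.mono u) * h.twist' u f := by
            rw [← mul_assoc, mul_assoc a (h.twist u b) (h.mono u)]
        _ = a * (h.mono u * b) * h.twist' u f := by rw [← h.mono_mul_eq]
        _ = a * h.mono u * b * h.twist' u f := by rw [← mul_assoc a (h.mono u) b]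
    rw [heq]
    exact P.mul_mem_right _ _ (hab u)
  rcases prime_point hP key with hc | hmono
  · exact hc
  · obtain ⟨i, hi, hXi⟩ := h.mono_mem_P_imp hP u hmono
    exact absurd hXi (hu i hi)

lemma supported_mem (hn : 0 < n) {P : TwoSidedIdeal R} {g : R}
    (hg : ∀ s : Fin n →₀ ℕ, (∀ i, s i ≠ 0 → h.X i ∉ P) → h.coeff g s = 0) : g ∈ P := by
  classical
  set wf : Finset (Fin n) := Finset.univ.filter (fun i => h.X i ∈ P) with hwf
  set idx : (Fin n →₀ ℕ) → Fin n := fun s =>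
    if hs : ∃ i, s i ≠ 0 ∧ h.X i ∈ P then hs.choose else ⟨0, hn⟩ with hidx
  set gg : Fin n → R := fun i => h.coeff.symm fun t : Fin n →₀ ℕ =>
    if (∃ j : Fin n, (t + Finsupp.single i 1 : Fin n →₀ ℕ) j ≠ 0 ∧ h.X j ∈ P) ∧ idx (t + Finsupp.single i 1) = i
    then h.coeff g (t + Finsupp.single i 1) * (Q.weight t (Finsupp.single i 1))⁻¹
    else 0 with hgg
  have hcoeffgg : ∀ (i : Fin n) (t : Fin n →₀ ℕ), h.coeff (gg i) t =
      if (∃ j : Fin n, (t + Finsupp.single i 1 : Fin n →₀ ℕ) j ≠ 0 ∧ h.X j ∈ P) ∧ idx (t + Finsupp.single i 1) = i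
      then h.coeff g (t + Finsupp.single i 1) * (Q.weight t (Finsupp.single i 1))⁻¹
      else 0 := by
    intro i t
    rw [hgg]
    rw [h.coeff.apply_symm_apply]
  have hdecomp : g = ∑ i ∈ wf, gg i * h.X i := by
    apply h.coeff.injective
    funext s
    rw [map_sum, Finset.sum_apply]
    have hterm : ∀ i, h.coeff (gg i * h.X i) s =
        if Finsupp.single i 1 ≤ s then
          h.coeff (gg i) (s - Finsupp.single i 1) *
            Q.weight (s - Finsupp.single i 1) (Finsupp.single i 1)
        else 0 := fun i => h.coeff_mul_mono (gg i) (Finsupp.single i 1) s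
    by_cases hs : ∃ i, s i ≠ 0 ∧ h.X i ∈ P
    · -- the term `idx s` contributes exactly `coeff g s`
      set i0 : Fin n := hs.choose with hi0
      have hspec : s i0 ≠ 0 ∧ h.X i0 ∈ P := hs.choose_spec
      have hidxs : idx s = i0 := by rw [hidx]; exact dif_pos hs
      have hle0 : Finsupp.single i0 1 ≤ s :=
        Finsupp.single_le_iff.mpr (Nat.one_le_iff_ne_zero.mpr hspec.1)
      have hi0mem : i0 ∈ wf := by
        rw [hwf]
        exact Finset.mem_filter.mpr ⟨Finset.mem_univ _, hspec.2⟩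
      rw [Finset.sum_eq_single i0]
      · rw [hterm, if_pos hle0, hcoeffgg, tsub_add_cancel_of_le hle0, if_pos ⟨hs, hidxs⟩,
          mul_assoc, inv_mul_cancel₀ (Q.weight_ne_zero _ _), mul_one]
      · intro i _ hne
        rw [hterm]
        by_cases hle : Finsupp.single i 1 ≤ s
        · rw [if_pos hle, hcoeffgg, tsub_add_cancel_of_le hle, if_neg, zero_mul]
          rintro ⟨-, habs⟩
          exact hne (habs ▸ hidxs.symm ▸ rfl)
        · rw [if_neg hle]
      · intro habs
        exact absurd hi0mem habs
    · push_neg at hs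
      rw [hg s hs]
      symm
      apply Finset.sum_eq_zero
      intro i _
      rw [hterm]
      by_cases hle : Finsupp.single i 1 ≤ s
      · rw [if_pos hle, hcoeffgg, tsub_add_cancel_of_le hle, if_neg, zero_mul]
        rintro ⟨⟨j, hj1, hj2⟩, -⟩
        exact hs j hj1 hj2
      · rw [if_neg hle]
  rw [hdecomp]
  refine TwoSidedIdeal.finsetSum_mem _ _ _ fun i hi => ?_
  refine P.mul_mem_left _ _ ?_
  rw [hwf] at hi
  exact (Finset.mem_filter.mp hi).2

end IsQPowerSeriesRing

lemma sum_swap_triple (w : Fin n →₀ ℕ)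
    (G : (Fin n →₀ ℕ) → (Fin n →₀ ℕ) → (Fin n →₀ ℕ) → k) :
    ∑ x ∈ Finset.HasAntidiagonal.antidiagonal w, ∑ y ∈ Finset.HasAntidiagonal.antidiagonal x.2, G x.1 y.1 y.2 =
    ∑ x ∈ Finset.HasAntidiagonal.antidiagonal w, ∑ y ∈ Finset.HasAntidiagonal.antidiagonal x.1, G y.1 x.2 y.2 := by
  rw [Finset.sum_sigma', Finset.sum_sigma']
  refine Finset.sum_bij'
    (fun z hz => ⟨(z.1.1 + z.2.2, z.2.1), (z.1.1, z.2.2)⟩)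
    (fun z hz => ⟨(z.2.1, z.1.2 + z.2.2), (z.1.2, z.2.2)⟩)
    ?_ ?_ ?_ ?_ ?_
  · intro z hz
    simp only [Finset.mem_sigma, Finset.HasAntidiagonal.mem_antidiagonal] at hz ⊢
    obtain ⟨h1, h2⟩ := hz
    refine ⟨?_, trivial⟩
    rw [add_assoc, add_comm z.2.2 z.2.1, h2, h1]
  · intro z hz
    simp only [Finset.mem_sigma, Finset.HasAntidiagonal.mem_antidiagonal] at hz ⊢
    obtain ⟨h1, h2⟩ := hz
    refine ⟨?_, trivial⟩
    rw [add_comm z.1.2 z.2.2, ← add_assoc, h2, h1]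
  · intro z hz
    simp only [Finset.mem_sigma, Finset.HasAntidiagonal.mem_antidiagonal] at hz
    obtain ⟨⟨zu, zr⟩, ⟨zv, zt⟩⟩ := z
    obtain ⟨h1, h2⟩ := hz
    simp only at h1 h2 ⊢
    subst h2
    rfl
  · intro z hz
    simp only [Finset.mem_sigma, Finset.HasAntidiagonal.mem_antidiagonal] at hz
    obtain ⟨⟨zp, zs⟩, ⟨zu, zt⟩⟩ := z
    obtain ⟨h1, h2⟩ := hz
    simp only at h1 h2 ⊢
    subst h2
    rfl
  · intro z hz
    rfl

namespace IsQPowerSeriesRing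

lemma main_id (a b f₀ : R) (A : Finset R) (μ : (Fin n →₀ ℕ) → R → k)
    (hμ : ∀ s, h.coeff f₀ s ≠ 0 → a * h.twist s b = ∑ c ∈ A, μ s c • c) :
    a * (f₀ * b) = ∑ c ∈ A, c * h.coeff.symm (fun s => μ s c * h.coeff f₀ s) := by
  apply h.coeff.injective
  funext w
  have hL : h.coeff (a * (f₀ * b)) w =
      ∑ x ∈ Finset.HasAntidiagonal.antidiagonal w, ∑ y ∈ Finset.HasAntidiagonal.antidiagonal x.2,
        h.coeff a x.1 * h.coeff f₀ y.1 * h.coeff b y.2 *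
          (Q.weight y.1 y.2 * (Q.weight x.1 y.1 * Q.weight x.1 y.2)) := by
    rw [h.coeff_mul]
    refine Finset.sum_congr rfl fun x hx => ?_
    rw [h.coeff_mul, Finset.mul_sum, Finset.sum_mul]
    refine Finset.sum_congr rfl fun y hy => ?_
    have hy2 : y.1 + y.2 = x.2 := Finset.HasAntidiagonal.mem_antidiagonal.mp hy
    rw [← hy2, Q.weight_add_right]
    ring
  have hL2 : h.coeff (a * (f₀ * b)) w =
      ∑ x ∈ Finset.HasAntidiagonal.antidiagonal w, ∑ y ∈ Finset.HasAntidiagonal.antidiagonal x.1,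
        h.coeff a y.1 * h.coeff f₀ x.2 * h.coeff b y.2 *
          (Q.weight x.2 y.2 * (Q.weight y.1 x.2 * Q.weight y.1 y.2)) := by
    rw [hL]
    exact sum_swap_triple w (fun u v t => h.coeff a u * h.coeff f₀ v * h.coeff b t *
      (Q.weight v t * (Q.weight u v * Q.weight u t)))
  have hR : h.coeff (∑ c ∈ A, c * h.coeff.symm (fun s => μ s c * h.coeff f₀ s)) w
      = ∑ x ∈ Finset.HasAntidiagonal.antidiagonal w, ∑ y ∈ Finset.HasAntidiagonal.antidiagonal x.1,
        h.coeff a y.1 * h.coeff f₀ x.2 * h.coeff b y.2 *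
          (Q.qsig x.2 y.2 * Q.weight y.1 y.2 * (Q.weight y.1 x.2 * Q.weight y.2 x.2)) := by
    rw [map_sum, Finset.sum_apply]
    have hterm : ∀ c ∈ A, h.coeff (c * h.coeff.symm (fun s => μ s c * h.coeff f₀ s)) w
        = ∑ x ∈ Finset.HasAntidiagonal.antidiagonal w,
            h.coeff c x.1 * (μ x.2 c * h.coeff f₀ x.2) * Q.weight x.1 x.2 := by
      intro c _
      rw [h.coeff_mul]
      refine Finset.sum_congr rfl fun x hx => ?_
      rw [h.coeff.apply_symm_apply]
    rw [Finset.sum_congr rfl hterm, Finset.sum_comm]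
    refine Finset.sum_congr rfl fun x hx => ?_
    by_cases hf : h.coeff f₀ x.2 = 0
    · simp [hf]
    · have hval := hμ x.2 hf
      have hsum : (∑ c ∈ A, h.coeff c x.1 * (μ x.2 c * h.coeff f₀ x.2) * Q.weight x.1 x.2)
          = h.coeff (a * h.twist x.2 b) x.1 * h.coeff f₀ x.2 * Q.weight x.1 x.2 := by
        rw [hval, map_sum, Finset.sum_apply, Finset.sum_mul, Finset.sum_mul]
        refine Finset.sum_congr rfl fun c _ => ?_
        rw [map_smul, Pi.smul_apply, smul_eq_mul]
        ring
      rw [hsum, h.coeff_mul, Finset.sum_mul, Finset.sum_mul]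
      refine Finset.sum_congr rfl fun y hy => ?_
      have hy1 : y.1 + y.2 = x.1 := Finset.HasAntidiagonal.mem_antidiagonal.mp hy
      rw [h.coeff_twist, ← hy1, Q.weight_add_left]
      ring
  rw [hL2, hR]
  refine Finset.sum_congr rfl fun x hx => Finset.sum_congr rfl fun y hy => ?_
  rw [← Q.qsig_mul_weight x.2 y.2]
  ring

lemma span_extract (a b : R) (hb : (Function.support (h.coeff b)).Finite)
    (Ω : Set (Fin n →₀ ℕ)) :
    ∃ A : Finset R, (↑A : Set R) ⊆ (fun s => a * h.twist s b) '' Ω ∧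
      ∀ s ∈ Ω, ∃ μ : R → k, ∑ c ∈ A, μ c • c = a * h.twist s b := by
  classical
  set T : Finset (Fin n →₀ ℕ) := hb.toFinset with hT
  have htw : ∀ s, a * h.twist s b ∈ Submodule.span k
      ((T.image (fun t => a * h.mono t) : Finset R) : Set R) := by
    intro s
    have hrep0 : h.twist s b = ∑ t ∈ T, (Q.qsig s t * h.coeff b t) • h.mono t := by
      apply h.coeff.injective
      funext r
      rw [map_sum, Finset.sum_apply, h.coeff_twist]
      have hterm : ∀ t ∈ T, h.coeff ((Q.qsig s t * h.coeff b t) • h.mono t) r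
          = (Q.qsig s t * h.coeff b t) * (if r = t then 1 else 0) := by
        intro t _
        rw [map_smul, Pi.smul_apply, smul_eq_mul, h.coeff_mono]
      rw [Finset.sum_congr rfl hterm]
      by_cases hr : r ∈ T
      · rw [Finset.sum_eq_single r]
        · rw [if_pos rfl, mul_one]
        · intro t _ hne
          rw [if_neg (fun hh => hne hh.symm), mul_zero]
        · intro habs
          exact absurd hr habs
      · have hb0 : h.coeff b r = 0 := by
          by_contra hc
          exact hr (by rw [hT]; exact hb.mem_toFinset.mpr (Function.mem_support.mpr hc))
        rw [hb0, mul_zero]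
        symm
        apply Finset.sum_eq_zero
        intro t ht
        have hne : r ≠ t := fun hh => hr (by rw [hh]; exact ht)
        rw [if_neg hne, mul_zero]
    have hrep : a * h.twist s b = ∑ t ∈ T, (Q.qsig s t * h.coeff b t) • (a * h.mono t) := by
      rw [hrep0, Finset.mul_sum]
      exact Finset.sum_congr rfl fun t _ => (mul_smul_comm _ _ _)
    rw [hrep]
    refine Submodule.sum_mem _ fun t ht => Submodule.smul_mem _ _ (Submodule.subset_span ?_)
    exact Finset.mem_coe.mpr (Finset.mem_image.mpr ⟨t, ht, rfl⟩)
  set G : Set R := (fun s => a * h.twist s b) '' Ω with hG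
  have hGle : Submodule.span k G ≤
      Submodule.span k ((T.image fun t => a * h.mono t : Finset R) : Set R) := by
    rw [Submodule.span_le]
    rintro _ ⟨s, -, rfl⟩
    exact htw s
  haveI hfd : FiniteDimensional k (Submodule.span k G) :=
    Submodule.finiteDimensional_of_le hGle
  have hfg : (Submodule.span k G).FG := (Submodule.fg_iff_finiteDimensional _).mpr hfd
  obtain ⟨S, hS⟩ := hfg
  have hx : ∀ x ∈ S, ∃ Tx : Finset R, ↑Tx ⊆ G ∧ x ∈ Submodule.span k (Tx : Set R) := by
    intro x hxS
    have hxG : x ∈ Submodule.span k G := by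
      rw [← hS]
      exact Submodule.subset_span hxS
    exact Submodule.mem_span_finite_of_mem_span hxG
  choose Tx hTx1 hTx2 using hx
  refine ⟨S.attach.biUnion (fun x => Tx x.1 x.2), ?_, ?_⟩
  · intro c hc
    simp only [Finset.mem_coe, Finset.mem_biUnion, Finset.mem_attach, true_and] at hc
    obtain ⟨x, hcx⟩ := hc
    exact hTx1 x.1 x.2 hcx
  · intro s hs
    have hmem : a * h.twist s b ∈ Submodule.span k
        ((S.attach.biUnion fun x => Tx x.1 x.2 : Finset R) : Set R) := by
      have h1 : a * h.twist s b ∈ Submodule.span k ((S : Set R)) := by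
        rw [hS]
        exact Submodule.subset_span ⟨s, hs, rfl⟩
      refine Submodule.span_le.mpr (fun x hxS => ?_) h1
      have hxS' : x ∈ S := hxS
      refine Submodule.span_mono ?_ (hTx2 x hxS')
      intro y hy
      exact Finset.mem_coe.mpr (Finset.mem_biUnion.mpr ⟨⟨x, hxS'⟩, Finset.mem_attach _ _, hy⟩)
    obtain ⟨μ, -, hμ⟩ := Submodule.mem_span_finset.mp hmem
    exact ⟨μ, hμ⟩

lemma main (hn : 0 < n) {P : TwoSidedIdeal R} (hP : IsPrimeTwoSided P) {a b : R}
    (hb : (Function.support (h.coeff b)).Finite)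
    (hab : ∀ p : Fin n →₀ ℕ, a * h.mono p * b ∈ P) :
    ∀ f : R, a * f * b ∈ P := by
  classical
  intro f
  set S₀ : Set (Fin n →₀ ℕ) := {s | ∀ i, s i ≠ 0 → h.X i ∉ P} with hS₀
  set f1 : R := h.coeff.symm (fun s => if s ∈ S₀ then h.coeff f s else 0) with hf1
  set f2 : R := f - f1 with hf2
  have hcoeff1 : ∀ s, h.coeff f1 s = if s ∈ S₀ then h.coeff f s else 0 := fun s => by
    rw [hf1, h.coeff.apply_symm_apply]
  have hsplit : a * f * b = a * (f1 * b) + a * (f2 * b) := by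
    rw [hf2]
    noncomm_ring
  rw [hsplit]
  refine P.add_mem ?_ ?_
  · obtain ⟨A, hA1, hA2⟩ := h.span_extract a b hb S₀
    have hμ' : ∀ s : Fin n →₀ ℕ, ∃ μ : R → k,
        (h.coeff f1 s ≠ 0) → ∑ c ∈ A, μ c • c = a * h.twist s b := by
      intro s
      by_cases hs : s ∈ S₀
      · obtain ⟨μ, hμ⟩ := hA2 s hs
        exact ⟨μ, fun _ => hμ⟩
      · refine ⟨0, fun hne => absurd ?_ hne⟩
        rw [hcoeff1, if_neg hs]
    choose μ hμ using hμ'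
    rw [h.main_id a b f1 A (fun s c => μ s c) (fun s hs => (hμ s hs).symm)]
    refine TwoSidedIdeal.finsetSum_mem _ _ _ fun c hc => ?_
    refine P.mul_mem_right _ _ ?_
    obtain ⟨s, hsΩ, rfl⟩ := hA1 hc
    exact h.twist_mem hP hab hsΩ
  · obtain ⟨A, hA1, hA2⟩ := h.span_extract a b hb Set.univ
    have hμ' : ∀ s : Fin n →₀ ℕ, ∃ μ : R → k,
        ∑ c ∈ A, μ c • c = a * h.twist s b := fun s => hA2 s (Set.mem_univ s)
    choose μ hμ using hμ'
    rw [h.main_id a b f2 A (fun s c => μ s c) (fun s _ => (hμ s).symm)]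
    refine TwoSidedIdeal.finsetSum_mem _ _ _ fun c hc => ?_
    refine P.mul_mem_left _ _ ?_
    refine h.supported_mem hn (fun s hs => ?_)
    rw [h.coeff.apply_symm_apply]
    have hz : h.coeff f2 s = 0 := by
      rw [hf2, map_sub, Pi.sub_apply, hcoeff1, if_pos (show s ∈ S₀ from hs), sub_self]
    rw [hz, mul_zero]

end IsQPowerSeriesRing

end Stmt3Aux

/-- If `P` is a prime two-sided ideal of `R = k_q[[x_1,…,x_n]]`, then
`P ∩ k_q[x]` is a prime two-sided ideal of the polynomial subalgebra `k_q[x]`. -/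
theorem stmt_3 {k : Type*} [Field k] {n : ℕ} (hn : 0 < n) (Q : QMatrix k n)
    (R : Type*) [Ring R] [Algebra k R] (h : IsQPowerSeriesRing Q R)
    (P : TwoSidedIdeal R) (hP : IsPrimeTwoSided P) :
    IsPrimeTwoSided (TwoSidedIdeal.comap h.polySubalgebra.val P) := by
  classical
  constructor
  · intro htop
    apply hP.1
    refine P.eq_top ?_
    have h1 : (1 : h.polySubalgebra) ∈ TwoSidedIdeal.comap h.polySubalgebra.val P :=
      TwoSidedIdeal.one_mem _ htop
    have h2 := (TwoSidedIdeal.mem_comap (f := h.polySubalgebra.val)).mp h1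
    rwa [map_one] at h2
  · intro I J hIJ
    by_contra hc
    push_neg at hc
    obtain ⟨hI, hJ⟩ := hc
    obtain ⟨a, haI, haP⟩ := SetLike.not_le_iff_exists.mp hI
    obtain ⟨b, hbJ, hbP⟩ := SetLike.not_le_iff_exists.mp hJ
    simp only [TwoSidedIdeal.mem_comap, Subalgebra.coe_val] at haP hbP
    have hmono : ∀ p : Fin n →₀ ℕ, (a : R) * h.mono p * (b : R) ∈ P := by
      intro p
      have hp : h.mono p ∈ h.polySubalgebra := h.mono_mem_poly p
      have hmem : a * (⟨h.mono p, hp⟩ : h.polySubalgebra) ∈ I := I.mul_mem_right _ _ haI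
      have h2 := hIJ _ hmem _ hbJ
      rw [TwoSidedIdeal.mem_comap] at h2
      simpa using h2
    have hbfin : (Function.support (h.coeff (b : R))).Finite := b.2
    rcases IsQPowerSeriesRing.prime_point hP (h.main hn hP hbfin hmono) with hca | hcb
    · exact haP hca
    · exact hbP hcb

end
end

section
/- An element f = Σ_{s∈ℤ^n} c_s x^s of L is central if and only if c_s = 0 for every s ∉ S; that is, the center Z of L consists exactly of those Laurent series supported on the subgroup S. -/
/-!
Common setup: `q`-commutative power series ring `R = k_q[[x_1,…,x_n]]` and
`q`-commutative Laurent series ring `L = k_q[[x_1^{±1},…,x_n^{±1}]]`, characterized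
by their coefficient descriptions (twisted convolution multiplication).
-/

noncomputable section

lemma QMatrix.zweight_ne_zero' {k : Type*} [Field k] {n : ℕ} (Q : QMatrix k n)
    (u v : Fin n → ℤ) : Q.zweight u v ≠ 0 := by
  unfold QMatrix.zweight
  rw [Finset.prod_ne_zero_iff]
  intro i _
  rw [Finset.prod_ne_zero_iff]
  intro j _
  split
  · exact zpow_ne_zero _ (Q.q_ne_zero i j)
  · exact one_ne_zero

lemma QMatrix.zweight_eq_sigma_mul' {k : Type*} [Field k] {n : ℕ} (Q : QMatrix k n)
    (s t : Fin n → ℤ) : Q.zweight s t = Q.sigma s t * Q.zweight t s := by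
  classical
  have hzw : ∀ u v : Fin n → ℤ, Q.zweight u v =
      ∏ p ∈ (Finset.univ ×ˢ Finset.univ : Finset (Fin n × Fin n)).filter (fun p => p.2 < p.1),
        Q.q p.1 p.2 ^ (u p.1 * v p.2) := by
    intro u v
    rw [Finset.prod_filter]
    exact (Finset.prod_product' Finset.univ Finset.univ (fun i j => if j < i then Q.q i j ^ (u i * v j) else 1)).symm
  have hsig : Q.sigma s t =
      ∏ p ∈ (Finset.univ ×ˢ Finset.univ : Finset (Fin n × Fin n)), Q.q p.1 p.2 ^ (s p.1 * t p.2) :=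
    (Finset.prod_product' Finset.univ Finset.univ (fun i j => Q.q i j ^ (s i * t j))).symm
  rw [hzw, hzw, hsig]
  rw [← Finset.prod_filter_mul_prod_filter_not (Finset.univ ×ˢ Finset.univ : Finset (Fin n × Fin n)) (fun p => p.2 < p.1)
    (fun p => Q.q p.1 p.2 ^ (s p.1 * t p.2))]
  have hnot : ∏ p ∈ (Finset.univ ×ˢ Finset.univ : Finset (Fin n × Fin n)).filter (fun p => ¬ p.2 < p.1), Q.q p.1 p.2 ^ (s p.1 * t p.2)
      = ∏ p ∈ (Finset.univ ×ˢ Finset.univ : Finset (Fin n × Fin n)).filter (fun p => p.1 < p.2), Q.q p.1 p.2 ^ (s p.1 * t p.2) := by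
    symm
    apply Finset.prod_subset
    · intro p hp
      simp only [Finset.mem_filter] at hp ⊢
      exact ⟨hp.1, not_lt.mpr (le_of_lt hp.2)⟩
    · intro p hp hnp
      simp only [Finset.mem_filter] at hp hnp
      have : p.1 = p.2 := le_antisymm (not_lt.mp hp.2) (not_lt.mp (fun hh => hnp ⟨hp.1, hh⟩))
      rw [← this, Q.diag, one_zpow]
  rw [hnot]
  have hswap : ∏ p ∈ (Finset.univ ×ˢ Finset.univ : Finset (Fin n × Fin n)).filter (fun p => p.1 < p.2), Q.q p.1 p.2 ^ (s p.1 * t p.2)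
      = ∏ p ∈ (Finset.univ ×ˢ Finset.univ : Finset (Fin n × Fin n)).filter (fun p => p.2 < p.1), Q.q p.2 p.1 ^ (s p.2 * t p.1) := by
    apply Finset.prod_bij' (fun p _ => Prod.swap p) (fun p _ => Prod.swap p)
    · intro p hp; simp only [Finset.mem_filter] at hp ⊢; simpa using hp.2
    · intro p hp; simp only [Finset.mem_filter] at hp ⊢; simpa using hp.2
    · intro p _; simp
    · intro p _; simp
    · intro p _; simp
  rw [hswap, mul_assoc, ← Finset.prod_mul_distrib]
  have : ∏ p ∈ (Finset.univ ×ˢ Finset.univ : Finset (Fin n × Fin n)).filter (fun p => p.2 < p.1),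
      (Q.q p.2 p.1 ^ (s p.2 * t p.1) * Q.q p.1 p.2 ^ (t p.1 * s p.2)) = 1 := by
    apply Finset.prod_eq_one
    intro p _
    rw [mul_comm (t p.1) (s p.2), ← mul_zpow, Q.antisym p.2 p.1, one_zpow]
  rw [this, mul_one]

/-- An element `f = Σ_{s∈ℤ^n} c_s x^s` of `L` is central iff `c_s = 0`
for every `s ∉ S`, where `S = {s : σ(s,t) = 1 for all t}`; that is, the center `Z` of
`L` consists exactly of those Laurent series supported on the subgroup `S`. -/
theorem stmt_4 {k : Type*} [Field k] {n : ℕ} (hn : 0 < n) (Q : QMatrix k n)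
    (L : Type*) [Ring L] [Algebra k L] (h : IsQLaurentSeriesRing Q L) :
    ∀ f : L, f ∈ Subring.center L ↔
      ∀ s : Fin n → ℤ, ¬ (∀ t : Fin n → ℤ, Q.sigma s t = 1) → h.coeff f s = 0 := by
  intro f
  constructor
  · intro hf s hs
    push_neg at hs
    obtain ⟨t, ht⟩ := hs
    -- the monomial x^t
    have hbd : LaurentBounded (fun u : Fin n → ℤ => if u = t then (1 : k) else 0) := by
      refine ⟨Finset.univ.sup (fun i => (t i).natAbs), fun u hu => ?_⟩
      obtain ⟨i, hi⟩ := hu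
      show (if u = t then (1:k) else 0) = 0
      rw [if_neg]
      intro hut
      rw [hut] at hi
      have h1' : (t i).natAbs ≤ Finset.univ.sup (fun i => (t i).natAbs) :=
        Finset.le_sup (f := fun i => (t i).natAbs) (Finset.mem_univ i)
      have h1 : ((t i).natAbs : ℤ) ≤ ((Finset.univ.sup (fun i => (t i).natAbs) : ℕ) : ℤ) :=
        Int.ofNat_le.mpr h1'
      have h2 : -((t i).natAbs : ℤ) ≤ t i := by omega
      omega
    obtain ⟨g, hg⟩ := h.coeff_surjective _ hbd
    have hcomm := (Subring.mem_center_iff.mp hf) g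
    have h1 : h.coeff (f * g) (s + t) = h.coeff f s * Q.zweight s t := by
      rw [h.coeff_mul]
      rw [finsum_eq_single _ s (fun u hu => ?_)]
      · rw [hg]
        simp [add_sub_cancel_left]
      · rw [hg]
        simp only []
        rw [if_neg, mul_zero, zero_mul]
        intro hh
        apply hu
        have h2 : s + t = t + u := sub_eq_iff_eq_add.mp hh
        rw [add_comm t u] at h2
        exact (add_right_cancel h2).symm
    have h2 : h.coeff (g * f) (s + t) = h.coeff f s * Q.zweight t s := by
      rw [h.coeff_mul]
      rw [finsum_eq_single _ t (fun u hu => ?_)]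
      · rw [hg]
        simp [add_sub_cancel_right]
      · rw [hg]
        simp only []
        rw [if_neg hu, zero_mul, zero_mul]
    by_contra hc
    have h3 : h.coeff f s * Q.zweight s t = h.coeff f s * Q.zweight t s := by
      rw [← h1, ← h2, hcomm]
    have h4 : Q.zweight s t = Q.zweight t s := mul_left_cancel₀ hc h3
    rw [Q.zweight_eq_sigma_mul' s t] at h4
    exact ht (mul_right_cancel₀ (Q.zweight_ne_zero' t s) (h4.trans (one_mul _).symm))
  · intro hf
    rw [Subring.mem_center_iff]
    intro g
    apply h.coeff_injective
    funext s
    rw [h.coeff_mul, h.coeff_mul]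
    rw [← finsum_comp_equiv (Equiv.subLeft s)]
    apply finsum_congr
    intro u
    simp only [Equiv.subLeft_apply, sub_sub_cancel]
    by_cases hc : h.coeff f u = 0
    · rw [hc]; ring
    · have hsig1 : ∀ t, Q.sigma u t = 1 := by
        by_contra hcon
        exact hc (hf _ hcon)
      have hz : Q.zweight u (s - u) = Q.zweight (s - u) u := by
        rw [Q.zweight_eq_sigma_mul' u (s - u), hsig1, one_mul]
      rw [hz]; ring

end
end

section
/- Assume k is infinite. Then every nonzero H-stable two-sided ideal I of R is generated by monomials: every monomial x^s appearing with nonzero coefficient in some element of I belongs to I, and I is generated as a two-sided ideal of R by the set of monomials x^s (s ∈ ℕ^n) that it contains. -/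
/-!
Common setup: `q`-commutative power series ring `R = k_q[[x_1,…,x_n]]` and
`q`-commutative Laurent series ring `L = k_q[[x_1^{±1},…,x_n^{±1}]]`, characterized
by their coefficient descriptions (twisted convolution multiplication).
-/

noncomputable section

namespace Stmt5Aux

open IsQPowerSeriesRing Finset

variable {k : Type*} [Field k] {n : ℕ} {Q : QMatrix k n}
variable {R : Type*} [Ring R] [Algebra k R] (h : IsQPowerSeriesRing Q R)

lemma weight_ne_zero (u v : Fin n →₀ ℕ) : Q.weight u v ≠ 0 := by
  unfold QMatrix.weight
  refine Finset.prod_ne_zero_iff.2 fun i _ => Finset.prod_ne_zero_iff.2 fun j _ => ?_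
  split
  · exact pow_ne_zero _ (Q.q_ne_zero i j)
  · exact one_ne_zero

lemma weight_zero_right (u : Fin n →₀ ℕ) : Q.weight u (0 : Fin n →₀ ℕ) = 1 := by
  simp [QMatrix.weight]

lemma weight_zero_left (v : Fin n →₀ ℕ) : Q.weight (0 : Fin n →₀ ℕ) v = 1 := by
  simp [QMatrix.weight]

lemma coeff_mono (s t : Fin n →₀ ℕ) :
    h.coeff (h.mono s) t = if t = s then 1 else 0 := by
  simp [IsQPowerSeriesRing.mono]

lemma coeff_mul_mono (f : R) (v t : Fin n →₀ ℕ) :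
    h.coeff (f * h.mono v) t =
      if v ≤ t then h.coeff f (t - v) * Q.weight (t - v) v else 0 := by
  rw [h.coeff_mul]
  by_cases hv : v ≤ t
  · rw [if_pos hv]
    rw [Finset.sum_eq_single ((t - v, v) : (Fin n →₀ ℕ) × (Fin n →₀ ℕ))]
    · rw [coeff_mono, if_pos rfl, mul_one]
    · rintro ⟨a, b⟩ hab hne
      rw [Finset.HasAntidiagonal.mem_antidiagonal] at hab
      rw [coeff_mono]
      rcases eq_or_ne b v with rfl | hbv
      · exact absurd (by rw [Prod.mk.injEq]; exact ⟨eq_tsub_of_add_eq hab, rfl⟩) hne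
      · rw [if_neg hbv]; ring
    · intro hmem
      exfalso
      apply hmem
      rw [Finset.HasAntidiagonal.mem_antidiagonal]
      exact tsub_add_cancel_of_le hv
  · rw [if_neg hv]
    apply Finset.sum_eq_zero
    rintro ⟨a, b⟩ hab
    rw [Finset.HasAntidiagonal.mem_antidiagonal] at hab
    rw [coeff_mono]
    rcases eq_or_ne b v with rfl | hbv
    · exact absurd (hab ▸ le_add_self) hv
    · rw [if_neg hbv]; ring

lemma coeff_smul (a : k) (f : R) (t : Fin n →₀ ℕ) :
    h.coeff (a • f) t = a * h.coeff f t := by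
  rw [map_smul]; rfl

lemma mono_mul_mono (u v : Fin n →₀ ℕ) :
    h.mono u * h.mono v = Q.weight u v • h.mono (u + v) := by
  apply h.coeff.injective
  funext t
  simp only [coeff_mul_mono, map_smul, Pi.smul_apply, smul_eq_mul, coeff_mono]
  by_cases ht : t = u + v
  · subst ht
    rw [if_pos rfl, mul_one, if_pos (le_add_self : v ≤ u + v), add_tsub_cancel_right,
      if_pos rfl, one_mul]
  · rw [if_neg ht, mul_zero]
    by_cases hv : v ≤ t
    · rw [if_pos hv, if_neg, zero_mul]
      intro he
      exact ht (by rw [← he, tsub_add_cancel_of_le hv])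
    · rw [if_neg hv]

lemma smul_mem_ideal (I : TwoSidedIdeal R) (a : k) {x : R} (hx : x ∈ I) : a • x ∈ I := by
  rw [Algebra.smul_def]; exact I.mul_mem_left _ _ hx

lemma sum_mem_ideal (I : TwoSidedIdeal R) {ι : Type*} [DecidableEq ι] (t : Finset ι) {f : ι → R}
    (hf : ∀ i ∈ t, f i ∈ I) : ∑ i ∈ t, f i ∈ I := by
  induction t using Finset.induction with
  | empty => simpa using I.zero_mem
  | insert _ _ hx ih =>
    rw [Finset.sum_insert hx]
    exact I.add_mem (hf _ (Finset.mem_insert_self _ _))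
      (ih fun i hi => hf _ (Finset.mem_insert_of_mem hi))

lemma mono_mem_of_le {I : TwoSidedIdeal R} {a s : Fin n →₀ ℕ} (ha : h.mono a ∈ I)
    (hle : a ≤ s) : h.mono s ∈ I := by
  have he : h.mono a * h.mono (s - a) = Q.weight a (s - a) • h.mono s := by
    rw [mono_mul_mono, add_tsub_cancel_of_le hle]
  have h2 : (Q.weight a (s - a) : k)⁻¹ • (h.mono a * h.mono (s - a)) ∈ I :=
    smul_mem_ideal _ _ (I.mul_mem_right _ _ ha)
  rwa [he, smul_smul, inv_mul_cancel₀ (weight_ne_zero _ _), one_smul] at h2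

lemma coeff_hAct (θ : Fin n → kˣ) (f : R) (t : Fin n →₀ ℕ) :
    h.coeff (h.hAct θ f) t = (∏ i, (θ i : k) ^ (t i)) * h.coeff f t := by
  simp [IsQPowerSeriesRing.hAct]

lemma hAct_mem {I : TwoSidedIdeal R} (hIH : h.IsHStable I) (θ : Fin n → kˣ) {f : R}
    (hf : f ∈ I) : h.hAct θ f ∈ I := by
  have : h.hAct θ f ∈ (I : Set R) := by
    rw [← hIH θ]; exact ⟨f, hf, rfl⟩
  exact this

/-- total degree -/
def deg (s : Fin n →₀ ℕ) : ℕ := ∑ i, s i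

lemma deg_add (a b : Fin n →₀ ℕ) : deg (a + b) = deg a + deg b := by
  simp [deg, Finset.sum_add_distrib]

lemma deg_mono {a b : Fin n →₀ ℕ} (hab : a ≤ b) : deg a ≤ deg b :=
  Finset.sum_le_sum fun i _ => Finsupp.le_def.1 hab i

lemma deg_lt {a b : Fin n →₀ ℕ} (hab : a ≤ b) (hne : a ≠ b) : deg a < deg b := by
  obtain ⟨i, hi⟩ : ∃ i, a i ≠ b i := by
    by_contra hcon
    push_neg at hcon
    exact hne (Finsupp.ext hcon)
  exact Finset.sum_lt_sum (fun j _ => Finsupp.le_def.1 hab j)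
    ⟨i, Finset.mem_univ i, lt_of_le_of_ne (Finsupp.le_def.1 hab i) hi⟩

lemma deg_pos {a : Fin n →₀ ℕ} (ha : a ≠ 0) : 0 < deg a := by
  have := deg_lt (show (0 : Fin n →₀ ℕ) ≤ a from zero_le) (Ne.symm ha)
  simpa [deg] using this

/-- every element of S lies above a minimal element of S -/
lemma exists_min_le (S : Set (Fin n →₀ ℕ)) :
    ∀ d : ℕ, ∀ t ∈ S, deg t ≤ d → ∃ m ∈ S, m ≤ t ∧ ∀ t' ∈ S, t' ≤ m → t' = m := by
  intro d
  induction d with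
  | zero =>
    intro t ht hd
    refine ⟨t, ht, le_rfl, fun t' h1 h2 => ?_⟩
    by_contra hne
    exact absurd (lt_of_lt_of_le (deg_lt h2 hne) hd) (Nat.not_lt_zero _)
  | succ d ih =>
    intro t ht hd
    by_cases hmin : ∀ t' ∈ S, t' ≤ t → t' = t
    · exact ⟨t, ht, le_rfl, hmin⟩
    · push_neg at hmin
      obtain ⟨t', ht', hle, hne⟩ := hmin
      have hdeg : deg t' ≤ d := by
        have := deg_lt hle hne
        omega
      obtain ⟨m, hm, hle', hminm⟩ := ih t' ht' hdeg
      exact ⟨m, hm, hle'.trans hle, hminm⟩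

/-- the set of minimal elements of a set of multi-indices is finite (Dickson) -/
lemma minimals_finite (S : Set (Fin n →₀ ℕ)) :
    ({t ∈ S | ∀ t' ∈ S, t' ≤ t → t' = t} : Set (Fin n →₀ ℕ)).Finite := by
  have hanti : IsAntichain (· ≤ ·) {t ∈ S | ∀ t' ∈ S, t' ≤ t → t' = t} := by
    rintro a ⟨haS, hamin⟩ b ⟨hbS, hbmin⟩ hne hle
    exact hne (hbmin a haS hle)
  exact hanti.finite_of_partiallyWellOrderedOn (Set.isPWO_of_wellQuasiOrderedLE _)

lemma pow_sum_eq {M : Type*} [CommMonoid M] (a : M) {ι : Type*} (s : Finset ι) (f : ι → ℕ) :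
    ∏ i ∈ s, a ^ f i = a ^ (∑ i ∈ s, f i) := by
  classical
  induction s using Finset.induction with
  | empty => simp
  | insert _ _ hx ih => rw [Finset.prod_insert hx, Finset.sum_insert hx, ih, pow_add]

lemma digits_inj : ∀ (m : ℕ) (M : ℕ) (f g : Fin m → ℕ), (∀ i, f i < M) → (∀ i, g i < M) →
    (∑ i, f i * M ^ (i : ℕ)) = (∑ i, g i * M ^ (i : ℕ)) → f = g := by
  intro m
  induction m with
  | zero => intro M f g _ _ _; funext i; exact i.elim0
  | succ m ih =>
    intro M f g hf hg hsum
    rw [Fin.sum_univ_succ, Fin.sum_univ_succ] at hsum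
    simp only [Fin.val_zero, pow_zero, mul_one, Fin.val_succ, pow_succ, ← mul_assoc] at hsum
    rw [← Finset.sum_mul, ← Finset.sum_mul] at hsum
    have hM : 0 < M := lt_of_le_of_lt (Nat.zero_le _) (hf 0)
    have h0 : f 0 = g 0 := by
      have h1 : f 0 % M = f 0 := Nat.mod_eq_of_lt (hf 0)
      have h2 : g 0 % M = g 0 := Nat.mod_eq_of_lt (hg 0)
      have := congrArg (· % M) hsum
      simpa [Nat.add_mul_mod_self_right, h1, h2] using this
    have htail : (∑ i : Fin m, f i.succ * M ^ (i : ℕ)) = ∑ i : Fin m, g i.succ * M ^ (i : ℕ) := by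
      have := hsum
      rw [h0] at this
      have h3 := Nat.add_left_cancel this
      exact Nat.eq_of_mul_eq_mul_right hM h3
    have := ih M (fun i => f i.succ) (fun i => g i.succ) (fun i => hf _) (fun i => hg _) htail
    funext i
    refine Fin.cases h0 (fun j => ?_) i
    exact congrFun this j

lemma exists_good_unit (k : Type*) [Field k] [Infinite k] (D : ℕ) :
    ∃ u : kˣ, ∀ d : ℕ, 0 < d → d ≤ D → (u : k) ^ d ≠ 1 := by
  have hfin : (⋃ d ∈ Finset.Icc 1 D, {x : k | x ^ d = 1}).Finite := by
    refine Set.Finite.biUnion (Finset.Icc 1 D).finite_toSet fun d hd => ?_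
    have hd1 : 0 < d := (Finset.mem_Icc.1 hd).1
    have hsub : {x : k | x ^ d = 1} ⊆
        {x : k | (Polynomial.X ^ d - Polynomial.C 1 : Polynomial k).IsRoot x} := by
      intro x hx
      simp only [Set.mem_setOf_eq] at hx ⊢
      simp [Polynomial.IsRoot, hx, sub_eq_zero]
    exact (Polynomial.finite_setOf_isRoot (Polynomial.X_pow_sub_C_ne_zero hd1 1)).subset hsub
  have hfin2 : ((⋃ d ∈ Finset.Icc 1 D, {x : k | x ^ d = 1}) ∪ {0} : Set k).Finite :=
    hfin.union (Set.finite_singleton 0)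
  obtain ⟨u, hu⟩ := hfin2.infinite_compl.nonempty
  rw [Set.mem_compl_iff, Set.mem_union, not_or] at hu
  refine ⟨Units.mk0 u (by simpa using hu.2), fun d hd1 hd2 h1 => ?_⟩
  exact hu.1 (Set.mem_biUnion (Finset.mem_Icc.2 ⟨hd1, hd2⟩) h1)

lemma vandermonde_solve {k : Type*} [Field k] {ι : Type*} [Fintype ι] [DecidableEq ι]
    (x : ι → k) (hx : Function.Injective x) (b : ι → k) :
    ∃ (m : ℕ) (c : Fin m → k), ∀ a, ∑ j : Fin m, x a ^ (j : ℕ) * c j = b a := by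
  classical
  set m := Fintype.card ι with hm
  let eF : ι ≃ Fin m := Fintype.equivFin ι
  set A : Matrix (Fin m) (Fin m) k := Matrix.vandermonde (fun a => x (eF.symm a)) with hA
  have hdet : A.det ≠ 0 := by
    rw [hA, Matrix.det_vandermonde]
    refine Finset.prod_ne_zero_iff.2 fun i _ => Finset.prod_ne_zero_iff.2 fun j hj => ?_
    rw [Finset.mem_Ioi] at hj
    exact sub_ne_zero.2 fun he => absurd (eF.symm.injective (hx he)) (ne_of_gt hj)
  set c : Fin m → k := A⁻¹.mulVec (fun a => b (eF.symm a)) with hc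
  have hsol : A.mulVec c = fun a => b (eF.symm a) := by
    rw [hc, Matrix.mulVec_mulVec, Matrix.mul_nonsing_inv _ (isUnit_iff_ne_zero.2 hdet),
      Matrix.one_mulVec]
  refine ⟨m, c, fun a => ?_⟩
  have := congrFun hsol (eF a)
  simp only [Matrix.mulVec, dotProduct, hA, Matrix.vandermonde, Equiv.symm_apply_apply,
    Matrix.of_apply] at this
  simpa using this

lemma extraction [Infinite k] {I : TwoSidedIdeal R} (hIH : h.IsHStable I) {f : R} (hf : f ∈ I)
    (T : Finset (Fin n →₀ ℕ)) (s0 : Fin n →₀ ℕ) :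
    ∃ g : R, g ∈ I ∧ (∀ t, h.coeff g t ≠ 0 → h.coeff f t ≠ 0) ∧
      h.coeff g s0 = h.coeff f s0 ∧ ∀ t ∈ T, t ≠ s0 → h.coeff g t = 0 := by
  classical
  set T' : Finset (Fin n →₀ ℕ) := insert s0 T with hT'
  set M : ℕ := 1 + T'.sup deg with hM
  have hentry : ∀ t ∈ T', ∀ i, t i < M := by
    intro t ht i
    have h1 : t i ≤ deg t :=
      Finset.single_le_sum (f := fun j => t j) (fun j _ => Nat.zero_le _) (Finset.mem_univ i)
    have h2 : deg t ≤ T'.sup deg := Finset.le_sup ht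
    omega
  set N : (Fin n →₀ ℕ) → ℕ := fun t => ∑ i, t i * M ^ (i : ℕ) with hN
  set D : ℕ := n * (M * M ^ n) with hD
  have hNbound : ∀ t ∈ T', N t ≤ D := by
    intro t ht
    have : N t ≤ ∑ _i : Fin n, M * M ^ n := by
      refine Finset.sum_le_sum fun i _ => ?_
      have h1 : t i < M := hentry t ht i
      have h2 : M ^ (i : ℕ) ≤ M ^ n := Nat.pow_le_pow_right (by omega) (le_of_lt i.2)
      exact Nat.mul_le_mul (le_of_lt h1) h2
    simpa [hD, Finset.sum_const, Finset.card_univ] using this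
  obtain ⟨u, hu⟩ := exists_good_unit k D
  set θ : Fin n → kˣ := fun i => u ^ (M ^ (i : ℕ)) with hθ
  set χ : (Fin n →₀ ℕ) → k := fun t => (u : k) ^ N t with hχ
  have hχθ : ∀ (j : ℕ) (t : Fin n →₀ ℕ),
      (∏ i, (((θ i) ^ j : kˣ) : k) ^ (t i)) = χ t ^ j := by
    intro j t
    calc (∏ i, (((θ i) ^ j : kˣ) : k) ^ (t i))
        = ∏ i, (u : k) ^ (t i * M ^ (i : ℕ) * j) := by
          refine Finset.prod_congr rfl fun i _ => ?_
          rw [hθ]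
          push_cast
          rw [← pow_mul, ← pow_mul]
          congr 1
          ring
      _ = (u : k) ^ (∑ i, t i * M ^ (i : ℕ) * j) := pow_sum_eq _ _ _
      _ = χ t ^ j := by rw [hχ, ← Finset.sum_mul, pow_mul, hN]
  have hucancel : ∀ a b : ℕ, a ≤ D → b ≤ D → (u : k) ^ a = (u : k) ^ b → a = b := by
    have key : ∀ a b : ℕ, a < b → b ≤ D → (u : k) ^ a ≠ (u : k) ^ b := by
      intro a b hab hbD he
      have h1 : (u : k) ^ a * (u : k) ^ (b - a) = (u : k) ^ a * 1 := by
        rw [mul_one, ← pow_add, Nat.add_sub_cancel' (le_of_lt hab)]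
        exact he.symm
      exact hu (b - a) (by omega) (by omega)
        (mul_left_cancel₀ (pow_ne_zero _ (Units.ne_zero u)) h1)
    intro a b ha hb he
    rcases Nat.lt_trichotomy a b with hlt | heq | hlt
    · exact absurd he (key a b hlt hb)
    · exact heq
    · exact absurd he.symm (key b a hlt ha)
  have hχinj : ∀ t ∈ T', ∀ t' ∈ T', χ t = χ t' → t = t' := by
    intro t ht t' ht' he
    have hNe : N t = N t' := hucancel _ _ (hNbound t ht) (hNbound t' ht') he
    have := digits_inj n M (fun i => t i) (fun i => t' i)
      (fun i => hentry t ht i) (fun i => hentry t' ht' i) hNe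
    exact Finsupp.ext fun i => congrFun this i
  set x : {a // a ∈ T'} → k := fun a => χ a.1 with hx
  have hxinj : Function.Injective x := by
    intro a b hab
    exact Subtype.ext (hχinj a.1 a.2 b.1 b.2 hab)
  obtain ⟨m, c, hsol⟩ := vandermonde_solve x hxinj
    (fun a => if (a.1 : Fin n →₀ ℕ) = s0 then 1 else 0)
  set g : R := ∑ j : Fin m, c j • h.hAct (fun i => θ i ^ (j : ℕ)) f with hg
  have hcoeffg : ∀ t, h.coeff g t = (∑ j : Fin m, χ t ^ (j : ℕ) * c j) * h.coeff f t := by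
    intro t
    calc h.coeff g t = ∑ j : Fin m, h.coeff (c j • h.hAct (fun i => θ i ^ (j : ℕ)) f) t := by
          rw [hg, map_sum]
          simp [Finset.sum_apply]
      _ = ∑ j : Fin m, χ t ^ (j : ℕ) * c j * h.coeff f t := by
          refine Finset.sum_congr rfl fun j _ => ?_
          rw [coeff_smul, coeff_hAct, ← hχθ]
          ring
      _ = (∑ j : Fin m, χ t ^ (j : ℕ) * c j) * h.coeff f t := by rw [Finset.sum_mul]
  have hs0mem : s0 ∈ T' := Finset.mem_insert_self _ _
  refine ⟨g, ?_, ?_, ?_, ?_⟩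
  · refine sum_mem_ideal I _ fun j _ => ?_
    exact smul_mem_ideal I _ (hAct_mem h hIH _ hf)
  · intro t hgt
    rw [hcoeffg] at hgt
    exact fun h0 => hgt (by rw [h0, mul_zero])
  · rw [hcoeffg]
    have := hsol ⟨s0, hs0mem⟩
    rw [if_pos rfl] at this
    rw [hx] at this
    rw [this, one_mul]
  · intro t htT htne
    have htmem : t ∈ T' := Finset.mem_insert_of_mem htT
    rw [hcoeffg]
    have := hsol ⟨t, htmem⟩
    rw [if_neg htne] at this
    rw [hx] at this
    rw [this, zero_mul]


lemma decompose {ι : Type*} [Fintype ι] [DecidableEq ι] (s : ι → Fin n →₀ ℕ)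
    (pick : (Fin n →₀ ℕ) → ι) (f : R)
    (hpick : ∀ t, h.coeff f t ≠ 0 → s (pick t) ≤ t) :
    ∃ r : ι → R, f = ∑ i, r i * h.mono (s i) ∧
      ∀ i, h.coeff (r i) 0 ≠ 0 → h.coeff f (s i) ≠ 0 := by
  classical
  set r : ι → R := fun i => h.coeff.symm
    (fun v => if pick (v + s i) = i then h.coeff f (v + s i) / Q.weight v (s i) else 0) with hr
  have hrc : ∀ i v, h.coeff (r i) v =
      if pick (v + s i) = i then h.coeff f (v + s i) / Q.weight v (s i) else 0 := by
    intro i v; rw [hr]; simp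
  have hFi : ∀ t i, h.coeff (r i * h.mono (s i)) t =
      if s i ≤ t ∧ pick t = i then h.coeff f t else 0 := by
    intro t i
    rw [coeff_mul_mono, hrc]
    by_cases hle : s i ≤ t
    · rw [tsub_add_cancel_of_le hle]
      by_cases hpi : pick t = i
      · rw [if_pos hle, if_pos hpi, if_pos ⟨hle, hpi⟩,
          div_mul_cancel₀ _ (weight_ne_zero _ _)]
      · rw [if_pos hle, if_neg hpi, if_neg (fun hcon => hpi hcon.2), zero_mul]
    · rw [if_neg hle, if_neg (fun hcon => hle hcon.1)]
  refine ⟨r, ?_, ?_⟩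
  · apply h.coeff.injective
    funext t
    rw [map_sum, Finset.sum_apply]
    rw [Finset.sum_congr rfl fun i _ => hFi t i]
    by_cases hft : h.coeff f t = 0
    · rw [hft]
      symm
      apply Finset.sum_eq_zero
      intro i _
      split <;> rfl
    · rw [Finset.sum_eq_single (pick t)]
      · rw [if_pos ⟨hpick t hft, rfl⟩]
      · intro j _ hji
        rw [if_neg (fun hcon => hji hcon.2.symm)]
      · intro habs
        exact absurd (Finset.mem_univ _) habs
  · intro i hne
    by_contra h0
    apply hne
    rw [hrc, zero_add]
    split
    · rw [h0, zero_div]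
    · rfl

end Stmt5Aux

namespace Stmt5Mat

open Stmt5Aux

variable {k : Type*} [Field k] {n : ℕ}

open scoped Classical in
noncomputable def cB (Q : QMatrix k n) {ι : Type*} [Fintype ι]
    (cA : ι → ι → (Fin n →₀ ℕ) → k) : (Fin n →₀ ℕ) → ι → ι → k := fun v l i =>
  (if v = 0 ∧ l = i then 1 else 0) -
    ∑ p ∈ ((Finset.HasAntidiagonal.antidiagonal v).filter fun p => ¬ p.2 = 0).attach,
      ∑ j, cB Q cA p.1.1 l j * cA j i p.1.2 * Q.weight p.1.1 p.1.2
  termination_by v => deg v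
  decreasing_by
    have hp := p.2
    simp only [Finset.mem_filter, Finset.HasAntidiagonal.mem_antidiagonal] at hp
    have h1 := congrArg deg hp.1
    rw [deg_add] at h1
    have h2 := deg_pos hp.2
    omega

end Stmt5Mat

namespace Stmt5Aux

open Stmt5Mat

variable {k : Type*} [Field k] {n : ℕ} {Q : QMatrix k n}
variable {R : Type*} [Ring R] [Algebra k R] (h : IsQPowerSeriesRing Q R)

lemma matrix_left_inverse {ι : Type*} [Fintype ι] [DecidableEq ι] (A : ι → ι → R)
    (hA0 : ∀ j i, h.coeff (A j i) 0 = if j = i then 1 else 0) :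
    ∃ B : ι → ι → R, ∀ l i, ∑ j, B l j * A j i = if l = i then (1 : R) else 0 := by
  classical
  set cA : ι → ι → (Fin n →₀ ℕ) → k := fun j i v => h.coeff (A j i) v with hcA
  set B : ι → ι → R := fun l j => h.coeff.symm (fun v => cB Q cA v l j) with hB
  refine ⟨B, fun l i => ?_⟩
  apply h.coeff.injective
  funext v
  have hrhs : h.coeff (if l = i then (1 : R) else 0) v = if v = 0 ∧ l = i then 1 else 0 := by
    by_cases hli : l = i
    · rw [if_pos hli, h.coeff_one]
      by_cases hv : v = 0
      · rw [if_pos hv, if_pos ⟨hv, hli⟩]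
      · rw [if_neg hv, if_neg (fun c => hv c.1)]
    · rw [if_neg hli, map_zero, Pi.zero_apply, if_neg (fun c => hli c.2)]
  rw [hrhs, map_sum, Finset.sum_apply]
  have hterm : ∀ j, h.coeff (B l j * A j i) v =
      ∑ p ∈ Finset.HasAntidiagonal.antidiagonal v, cB Q cA p.1 l j * cA j i p.2 * Q.weight p.1 p.2 := by
    intro j
    rw [h.coeff_mul]
    refine Finset.sum_congr rfl fun p _ => ?_
    have hBc : h.coeff (B l j) p.1 = cB Q cA p.1 l j := by rw [hB]; simp
    rw [hBc, hcA]
  rw [Finset.sum_congr rfl fun j _ => hterm j, Finset.sum_comm,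
    ← Finset.sum_filter_add_sum_filter_not (Finset.HasAntidiagonal.antidiagonal v) (fun p => p.2 = 0)]
  have hfil : (Finset.HasAntidiagonal.antidiagonal v).filter (fun p => p.2 = 0) = {((v, 0) : (Fin n →₀ ℕ) × (Fin n →₀ ℕ))} := by
    ext p
    simp only [Finset.mem_filter, Finset.HasAntidiagonal.mem_antidiagonal, Finset.mem_singleton]
    constructor
    · rintro ⟨h1, h2⟩
      have : p.1 = v := by rw [← h1, h2, add_zero]
      rw [Prod.ext_iff]
      exact ⟨this, h2⟩
    · rintro rfl
      simp
  rw [hfil, Finset.sum_singleton]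
  have h1 : ∑ j, cB Q cA v l j * cA j i (0 : Fin n →₀ ℕ) * Q.weight v 0 = cB Q cA v l i := by
    rw [Finset.sum_eq_single i]
    · rw [hcA]
      simp only []
      rw [hA0, if_pos rfl, mul_one, weight_zero_right, mul_one]
    · intro j _ hji
      rw [hcA]
      simp only []
      rw [hA0, if_neg hji, mul_zero, zero_mul]
    · intro habs
      exact absurd (Finset.mem_univ _) habs
  rw [h1]
  have hattach : ∑ p ∈ (Finset.HasAntidiagonal.antidiagonal v).filter (fun p => ¬ p.2 = 0),
        ∑ j, cB Q cA p.1 l j * cA j i p.2 * Q.weight p.1 p.2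
      = ∑ p ∈ ((Finset.HasAntidiagonal.antidiagonal v).filter fun p => ¬ p.2 = 0).attach,
        ∑ j, cB Q cA p.1.1 l j * cA j i p.1.2 * Q.weight p.1.1 p.1.2 :=
    (Finset.sum_attach _ _).symm
  rw [hattach]
  rw [cB.eq_def, sub_add_cancel]
  by_cases hc : v = 0 ∧ l = i <;> simp [hc]

end Stmt5Aux

namespace Stmt5Final
open Stmt5Aux Stmt5Mat
theorem stmt_5_aux {k : Type*} [Field k] [Infinite k] {n : ℕ} (hn : 0 < n) (Q : QMatrix k n)
    (R : Type*) [Ring R] [Algebra k R] (h : IsQPowerSeriesRing Q R)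
    (I : TwoSidedIdeal R) (hI0 : I ≠ ⊥) (hIH : h.IsHStable I) :
    (∀ f ∈ I, ∀ s : Fin n →₀ ℕ, h.coeff f s ≠ 0 → h.mono s ∈ I) ∧
    I = TwoSidedIdeal.span {g : R | ∃ s : Fin n →₀ ℕ, g = h.mono s ∧ g ∈ I} := by
  classical
  set S : Set (Fin n →₀ ℕ) := {s | ∃ f, f ∈ I ∧ h.coeff f s ≠ 0} with hS
  have hminfin := minimals_finite S
  set F : Finset (Fin n →₀ ℕ) := hminfin.toFinset with hF
  have hFS : ∀ s ∈ F, s ∈ S := fun s hs => (hminfin.mem_toFinset.1 hs).1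
  have hcover : ∀ t ∈ S, ∃ m ∈ F, m ≤ t := by
    intro t ht
    obtain ⟨m, h1, h2, h3⟩ := exists_min_le S (deg t) t ht le_rfl
    exact ⟨m, hminfin.mem_toFinset.2 ⟨h1, h3⟩, h2⟩
  rcases Finset.eq_empty_or_nonempty F with hFe | hFne
  · exfalso
    apply hI0
    refine le_antisymm ?_ bot_le
    intro f hf
    have hall : ∀ t, h.coeff f t = 0 := by
      intro t
      by_contra hc
      obtain ⟨m, hm, _⟩ := hcover t ⟨f, hf, hc⟩
      rw [hFe] at hm
      exact absurd hm (Finset.notMem_empty m)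
    have hf0 : f = 0 := by
      apply h.coeff.injective
      funext t
      rw [map_zero]
      exact hall t
    rw [hf0]
    exact TwoSidedIdeal.zero_mem _
  · haveI hne : Nonempty {a // a ∈ F} := ⟨⟨hFne.choose, hFne.choose_spec⟩⟩
    set sF : {a // a ∈ F} → (Fin n →₀ ℕ) := fun i => i.1 with hsF
    have hpickex : ∀ t : Fin n →₀ ℕ, ∃ i : {a // a ∈ F}, (t ∈ S → sF i ≤ t) := by
      intro t
      by_cases ht : t ∈ S
      · obtain ⟨m, hm, hle⟩ := hcover t ht
        exact ⟨⟨m, hm⟩, fun _ => hle⟩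
      · exact ⟨Classical.arbitrary _, fun hc => absurd hc ht⟩
    choose pick hpick using hpickex
    have hkey : ∀ i : {a // a ∈ F}, h.mono (sF i) ∈ I := by
      have hwit : ∀ i : {a // a ∈ F}, ∃ f, f ∈ I ∧ h.coeff f (sF i) ≠ 0 := fun i => hFS i.1 i.2
      choose fw hfwI hfwne using hwit
      have hg : ∀ j : {a // a ∈ F}, ∃ g, g ∈ I ∧
          (∀ t, h.coeff g t ≠ 0 → h.coeff (fw j) t ≠ 0) ∧
          h.coeff g (sF j) = h.coeff (fw j) (sF j) ∧ ∀ t ∈ F, t ≠ sF j → h.coeff g t = 0 :=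
        fun j => extraction h hIH (hfwI j) F (sF j)
      choose g hgI hgsupp hgs hgF using hg
      set c : {a // a ∈ F} → k := fun j => h.coeff (g j) (sF j) with hc
      have hcne : ∀ j, c j ≠ 0 := fun j => by rw [hc]; simp only []; rw [hgs j]; exact hfwne j
      set tail : {a // a ∈ F} → R := fun j => g j - c j • h.mono (sF j) with htail
      have htailc : ∀ j t, h.coeff (tail j) t =
          h.coeff (g j) t - c j * (if t = sF j then 1 else 0) := by
        intro j t
        rw [htail]
        simp only []
        rw [map_sub, Pi.sub_apply, coeff_smul, coeff_mono]
      have htailS : ∀ j t, h.coeff (tail j) t ≠ 0 → t ∈ S := by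
        intro j t hne2
        rcases eq_or_ne t (sF j) with rfl | htne
        · exfalso
          apply hne2
          rw [htailc, if_pos rfl, mul_one, hc]
          ring
        · rw [htailc, if_neg htne, mul_zero, sub_zero] at hne2
          exact ⟨g j, hgI j, hne2⟩
      have htailF : ∀ j, ∀ i : {a // a ∈ F}, h.coeff (tail j) (sF i) = 0 := by
        intro j i
        rcases eq_or_ne (sF i) (sF j) with he | hne2
        · rw [htailc, if_pos he, mul_one, he, hc]
          ring
        · rw [htailc, if_neg hne2, mul_zero, sub_zero]
          exact hgF j (sF i) i.2 hne2
      have hdec : ∀ j : {a // a ∈ F}, ∃ r : {a // a ∈ F} → R,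
          tail j = ∑ i, r i * h.mono (sF i) ∧
          ∀ i, h.coeff (r i) 0 ≠ 0 → h.coeff (tail j) (sF i) ≠ 0 :=
        fun j => decompose h sF pick (tail j) (fun t ht => hpick t (htailS j t ht))
      choose r hrdec hr0 using hdec
      have hr0' : ∀ j i, h.coeff (r j i) 0 = 0 := by
        intro j i
        by_contra hb
        exact (hr0 j i hb) (htailF j i)
      set A : {a // a ∈ F} → {a // a ∈ F} → R :=
        fun j i => (if j = i then (1 : R) else 0) + (c j)⁻¹ • r j i with hA
      have hA0 : ∀ j i, h.coeff (A j i) 0 = if j = i then 1 else 0 := by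
        intro j i
        rw [hA]
        simp only []
        rw [map_add, Pi.add_apply, coeff_smul, hr0', mul_zero, add_zero]
        by_cases hji : j = i
        · rw [if_pos hji, if_pos hji, h.coeff_one, if_pos rfl]
        · rw [if_neg hji, if_neg hji, map_zero, Pi.zero_apply]
      have hrel : ∀ j, ∑ i, A j i * h.mono (sF i) = (c j)⁻¹ • g j := by
        intro j
        have hsplit : ∀ i, A j i * h.mono (sF i) =
            (if j = i then (1 : R) else 0) * h.mono (sF i) + (c j)⁻¹ • (r j i * h.mono (sF i)) := by
          intro i
          rw [hA]
          simp only []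
          rw [add_mul, smul_mul_assoc]
        rw [Finset.sum_congr rfl fun i _ => hsplit i, Finset.sum_add_distrib]
        have h1 : ∑ i, (if j = i then (1 : R) else 0) * h.mono (sF i) = h.mono (sF j) := by
          rw [Finset.sum_eq_single j]
          · rw [if_pos rfl, one_mul]
          · intro b _ hbj
            rw [if_neg (fun hcon => hbj hcon.symm), zero_mul]
          · intro habs
            exact absurd (Finset.mem_univ _) habs
        have h2 : ∑ i, (c j)⁻¹ • (r j i * h.mono (sF i)) = (c j)⁻¹ • tail j := by
          rw [← Finset.smul_sum, ← hrdec j]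
        rw [h1, h2, htail]
        simp only []
        rw [smul_sub, smul_smul, inv_mul_cancel₀ (hcne j), one_smul]
        abel
      obtain ⟨B, hBA⟩ := matrix_left_inverse h A hA0
      intro l
      have hmono : h.mono (sF l) = ∑ j, B l j * ((c j)⁻¹ • g j) := by
        calc h.mono (sF l) = ∑ i, (if l = i then (1 : R) else 0) * h.mono (sF i) := by
              rw [Finset.sum_eq_single l]
              · rw [if_pos rfl, one_mul]
              · intro b _ hbl
                rw [if_neg (fun hcon => hbl hcon.symm), zero_mul]
              · intro habs
                exact absurd (Finset.mem_univ _) habs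
          _ = ∑ i, (∑ j, B l j * A j i) * h.mono (sF i) := by
              refine Finset.sum_congr rfl fun i _ => ?_
              rw [hBA l i]
          _ = ∑ i, ∑ j, B l j * (A j i * h.mono (sF i)) := by
              refine Finset.sum_congr rfl fun i _ => ?_
              rw [Finset.sum_mul]
              exact Finset.sum_congr rfl fun j _ => mul_assoc _ _ _
          _ = ∑ j, ∑ i, B l j * (A j i * h.mono (sF i)) := Finset.sum_comm
          _ = ∑ j, B l j * ((c j)⁻¹ • g j) := by
              refine Finset.sum_congr rfl fun j _ => ?_
              rw [← Finset.mul_sum, hrel j]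
      rw [hmono]
      refine sum_mem_ideal I _ fun j _ => ?_
      exact I.mul_mem_left _ _ (smul_mem_ideal I _ (hgI j))
    have hclause1 : ∀ f ∈ I, ∀ s, h.coeff f s ≠ 0 → h.mono s ∈ I := by
      intro f hf s hcs
      obtain ⟨m, hmF, hmle⟩ := hcover s ⟨f, hf, hcs⟩
      exact mono_mem_of_le h (hkey ⟨m, hmF⟩) hmle
    refine ⟨hclause1, le_antisymm ?_ ?_⟩
    · intro f hf
      obtain ⟨rr, hrd, _⟩ := decompose h sF pick f (fun t ht => hpick t ⟨f, hf, ht⟩)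
      rw [hrd]
      refine sum_mem_ideal _ _ fun i _ => ?_
      refine TwoSidedIdeal.mul_mem_left _ _ _ ?_
      apply TwoSidedIdeal.subset_span
      exact ⟨sF i, rfl, hkey i⟩
    · intro x hx
      refine TwoSidedIdeal.mem_span_iff.1 hx I ?_
      rintro gg ⟨s, _, hgg⟩
      exact hgg

end Stmt5Final


/-- Assume `k` is infinite. Every nonzero `H`-stable two-sided ideal
`I` of `R` is generated by monomials: every monomial `x^s` appearing with nonzero
coefficient in some element of `I` belongs to `I`, and `I` is generated as a two-sided
ideal of `R` by the set of monomials `x^s` (`s ∈ ℕ^n`) that it contains. -/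
theorem stmt_5 {k : Type*} [Field k] [Infinite k] {n : ℕ} (hn : 0 < n) (Q : QMatrix k n)
    (R : Type*) [Ring R] [Algebra k R] (h : IsQPowerSeriesRing Q R)
    (I : TwoSidedIdeal R) (hI0 : I ≠ ⊥) (hIH : h.IsHStable I) :
    (∀ f ∈ I, ∀ s : Fin n →₀ ℕ, h.coeff f s ≠ 0 → h.mono s ∈ I) ∧
    I = TwoSidedIdeal.span {g : R | ∃ s : Fin n →₀ ℕ, g = h.mono s ∧ g ∈ I} := by
  exact Stmt5Final.stmt_5_aux hn Q R h I hI0 hIH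

end
end
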